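/- arXiv:math/9807102 — 5 statements merged into one kernel-verified Lean document; each statement's English description precedes it below -/
import Mathlib

section
/- Suppose g : ℕ → ℂ is multiplicative and satisfies Condition (A) for some complex number κ and Condition (B). If Condition (C) holds with a real number β ≥ 0, then necessarily β ≥ |κ|. -/
open Filter Finset
open scoped ENNReal NNReal

/-- `g` is multiplicative: `g 1 = 1` and `g (m*n) = g m * g n` for coprime `m, n`. -/
def IsMult (g : ℕ → ℂ) : Prop :=
  g 1 = 1 ∧ ∀ m n : ℕ, Nat.Coprime m n → g (m * n) = g m * g n

/-- `M_g(x) = ∑_{n ≤ x} g(n)/n`. -/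
noncomputable def Mg (g : ℕ → ℂ) (x : ℝ) : ℂ :=
  ∑ n ∈ Finset.Icc 1 ⌊x⌋₊, g n / (n : ℂ)

/-- The finite set of primes `p ≤ x`. -/
noncomputable def primesLE (x : ℝ) : Finset ℕ :=
  (Finset.range (⌊x⌋₊ + 1)).filter Nat.Prime

/-- Condition (A): `∑_{p ≤ x} g(p) log p / p = κ log x + O(1)` for all `x ≥ 2`. -/
def CondA (g : ℕ → ℂ) (κ : ℂ) : Prop :=
  ∃ C : ℝ, ∀ x : ℝ, 2 ≤ x →
    ‖(∑ p ∈ primesLE x, g p * (Real.log p : ℂ) / (p : ℂ)) - κ * (Real.log x : ℂ)‖ ≤ C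

/-- Condition (B):
`∑_p (|g(p)| log p / p) ∑_{r≥1} |g(p^r)|/p^r + ∑_p ∑_{r≥2} |g(p^r)| log(p^r)/p^r < ∞`. -/
def CondB (g : ℕ → ℂ) : Prop :=
  (∑' p : Nat.Primes,
      ((‖g (p : ℕ)‖₊ : ℝ≥0∞) * ENNReal.ofReal (Real.log (p : ℕ)) / ((p : ℕ) : ℝ≥0∞)) *
        ∑' r : ℕ, (‖g ((p : ℕ) ^ (r + 1))‖₊ : ℝ≥0∞) / (((p : ℕ) ^ (r + 1) : ℕ) : ℝ≥0∞))
    + (∑' p : Nat.Primes, ∑' r : ℕ,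
        (‖g ((p : ℕ) ^ (r + 2))‖₊ : ℝ≥0∞) *
          ENNReal.ofReal (Real.log ((p : ℕ) ^ (r + 2) : ℕ)) /
          (((p : ℕ) ^ (r + 2) : ℕ) : ℝ≥0∞)) < ⊤

/-- Condition (C): `∏_{p ≤ x} (1 + |g(p)|/p) ≪ (log x)^β` for all `x ≥ 2`. -/
def CondC (g : ℕ → ℂ) (β : ℝ) : Prop :=
  ∃ C : ℝ, ∀ x : ℝ, 2 ≤ x →
    ∏ p ∈ primesLE x, (1 + ‖g p‖ / (p : ℝ)) ≤ C * Real.log x ^ β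

/-- The Euler factor `(1 - 1/p)^κ (1 + g(p)/p + g(p²)/p² + ⋯)` (principal branch power). -/
noncomputable def eulerFactor (g : ℕ → ℂ) (κ : ℂ) (p : ℕ) : ℂ :=
  (1 - 1 / (p : ℂ)) ^ κ * ∑' r : ℕ, g (p ^ r) / (p : ℂ) ^ r

lemma mem_primesLE {x : ℝ} (hx : 0 ≤ x) {p : ℕ} :
    p ∈ primesLE x ↔ Nat.Prime p ∧ (p : ℝ) ≤ x := by
  rw [primesLE, Finset.mem_filter, Finset.mem_range, Nat.lt_succ_iff, Nat.le_floor_iff hx, and_comm]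

lemma primesLE_mono {x y : ℝ} (h : x ≤ y) : primesLE x ⊆ primesLE y := by
  apply Finset.filter_subset_filter
  exact Finset.range_subset_range.2 (Nat.succ_le_succ (Nat.floor_mono h))

lemma primesLE_one : primesLE 1 = ∅ := by
  ext p
  simp only [primesLE, Finset.mem_filter, Finset.mem_range, Finset.notMem_empty, iff_false]
  rintro ⟨hp, hpp⟩
  have : ⌊(1:ℝ)⌋₊ = 1 := by norm_num
  rw [this] at hp
  interval_cases p
  · exact Nat.not_prime_zero hpp
  · exact Nat.not_prime_one hpp

/-- partial sums of `g p log p / p` at `exp j` -/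
noncomputable def aF (g : ℕ → ℂ) (j : ℕ) : ℂ :=
  ∑ p ∈ primesLE (Real.exp j), g p * (Real.log p : ℂ) / (p : ℂ)

/-- partial sums of `‖g p‖ / p` at `exp j` -/
noncomputable def SF (g : ℕ → ℂ) (j : ℕ) : ℝ :=
  ∑ p ∈ primesLE (Real.exp j), ‖g p‖ / p

lemma primesLE_exp_zero : primesLE (Real.exp (0:ℕ)) = ∅ := by
  rw [show Real.exp ((0:ℕ):ℝ) = 1 by norm_num]
  exact primesLE_one

lemma aF_zero (g : ℕ → ℂ) : aF g 0 = 0 := by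
  rw [aF, primesLE_exp_zero, Finset.sum_empty]

lemma SF_zero (g : ℕ → ℂ) : SF g 0 = 0 := by
  rw [SF, primesLE_exp_zero, Finset.sum_empty]

lemma SF_mono (g : ℕ → ℂ) {i j : ℕ} (h : i ≤ j) : SF g i ≤ SF g j := by
  rw [SF, SF]
  apply Finset.sum_le_sum_of_subset_of_nonneg
  · exact primesLE_mono (Real.exp_le_exp.2 (by exact_mod_cast h))
  · intro p _ _; positivity

lemma stepA (g : ℕ → ℂ) (i : ℕ) :
    ‖aF g (i+1) - aF g i‖ * (1 / ((i:ℝ)+1)) ≤ SF g (i+1) - SF g i := by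
  have hsub : primesLE (Real.exp i) ⊆ primesLE (Real.exp (i+1)) :=
    primesLE_mono (Real.exp_le_exp.2 (by exact_mod_cast Nat.le_succ i))
  have hdiff : aF g (i+1) - aF g i
      = ∑ p ∈ primesLE (Real.exp (i+1)) \ primesLE (Real.exp i),
          g p * (Real.log p : ℂ) / (p : ℂ) := by
    rw [sub_eq_iff_eq_add, aF, aF]
    push_cast
    exact (Finset.sum_sdiff hsub).symm
  have hSdiff : SF g (i+1) - SF g i
      = ∑ p ∈ primesLE (Real.exp (i+1)) \ primesLE (Real.exp i), ‖g p‖ / p := by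
    rw [sub_eq_iff_eq_add, SF, SF]
    push_cast
    exact (Finset.sum_sdiff hsub).symm
  have hbound : ‖aF g (i+1) - aF g i‖ ≤ ((i:ℝ)+1) * (SF g (i+1) - SF g i) := by
    rw [hdiff, hSdiff, Finset.mul_sum]
    refine le_trans (norm_sum_le _ _) (Finset.sum_le_sum ?_)
    intro p hp
    have hpmem := Finset.mem_sdiff.1 hp
    have hpP : Nat.Prime p ∧ (p:ℝ) ≤ Real.exp (i+1) :=
      (mem_primesLE (Real.exp_pos _).le).1 hpmem.1
    have hp2 : (2:ℝ) ≤ p := by exact_mod_cast hpP.1.two_le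
    have hppos : (0:ℝ) < p := by linarith
    have hlognn : 0 ≤ Real.log p := Real.log_nonneg (by linarith)
    have hlogle : Real.log p ≤ (i:ℝ) + 1 := by
      have h := Real.log_le_log hppos hpP.2
      rw [Real.log_exp] at h
      exact_mod_cast h
    have hnorm : ‖g p * (Real.log p : ℂ) / (p : ℂ)‖ = ‖g p‖ * Real.log p / p := by
      rw [norm_div, norm_mul, Complex.norm_real, Real.norm_eq_abs, Complex.norm_natCast,
        abs_of_nonneg hlognn]
    rw [hnorm]
    calc ‖g p‖ * Real.log p / p = Real.log p * (‖g p‖ / p) := by ring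
      _ ≤ ((i:ℝ)+1) * (‖g p‖ / p) :=
          mul_le_mul_of_nonneg_right hlogle (by positivity)
  have hi : (0:ℝ) < (i:ℝ) + 1 := by positivity
  rw [mul_one_div, div_le_iff₀ hi]
  calc ‖aF g (i+1) - aF g i‖ ≤ ((i:ℝ)+1) * (SF g (i+1) - SF g i) := hbound
    _ = (SF g (i+1) - SF g i) * ((i:ℝ)+1) := by ring

lemma abel_id (E c : ℕ → ℂ) (J : ℕ) :
    ∑ i ∈ Finset.range J, (E (i+1) - E i) * c (i+1)
      = E J * c (J+1) - E 0 * c 1 + ∑ i ∈ Finset.range J, E (i+1) * (c (i+1) - c (i+2)) := by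
  induction J with
  | zero => simp
  | succ n ih =>
    rw [Finset.sum_range_succ, ih, Finset.sum_range_succ]
    ring

lemma stepB (g : ℕ → ℂ) (κ : ℂ) (C : ℝ) (hC0 : 0 ≤ C)
    (hE : ∀ j : ℕ, ‖aF g j - κ * j‖ ≤ C) (J : ℕ) :
    ‖κ‖ * (∑ i ∈ Finset.range J, (1:ℝ) / ((i:ℝ)+1)) ≤ SF g J + 2*C := by
  set E : ℕ → ℂ := fun j => aF g j - κ * j with hEdef
  set c : ℕ → ℂ := fun j => ((1 / (j:ℝ) : ℝ) : ℂ) with hcdef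
  have hE0 : E 0 = 0 := by rw [hEdef]; simp [aF_zero]
  set H : ℝ := ∑ i ∈ Finset.range J, (1:ℝ) / ((i:ℝ)+1) with hHdef
  have hHnn : 0 ≤ H := Finset.sum_nonneg fun i _ => by positivity
  have hsplit : ∑ i ∈ Finset.range J, (aF g (i+1) - aF g i) * c (i+1)
      = κ * (H : ℂ) + ∑ i ∈ Finset.range J, (E (i+1) - E i) * c (i+1) := by
    have key : ∀ i : ℕ, (aF g (i+1) - aF g i) * c (i+1)
        = κ * c (i+1) + (E (i+1) - E i) * c (i+1) := by
      intro i
      have h1 : E (i+1) - E i = aF g (i+1) - aF g i - κ := by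
        rw [hEdef]
        push_cast
        ring
      rw [h1]; ring
    rw [Finset.sum_congr rfl fun i _ => key i, Finset.sum_add_distrib, ← Finset.mul_sum]
    congr 1
    rw [hHdef, hcdef]
    push_cast
    rfl
  have herr : ‖∑ i ∈ Finset.range J, (E (i+1) - E i) * c (i+1)‖ ≤ 2*C := by
    rw [abel_id, hE0, zero_mul, sub_zero]
    refine le_trans (norm_add_le _ _) ?_
    have h1 : ‖E J * c (J+1)‖ ≤ C := by
      rw [norm_mul]
      have hcn : ‖c (J+1)‖ ≤ 1 := by
        rw [hcdef, Complex.norm_real, Real.norm_eq_abs, abs_of_nonneg (by positivity)]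
        rw [div_le_one (by positivity)]
        push_cast
        linarith [Nat.cast_nonneg (α := ℝ) J]
      calc ‖E J‖ * ‖c (J+1)‖ ≤ C * 1 :=
            mul_le_mul (hE J) hcn (norm_nonneg _) hC0
        _ = C := mul_one C
    have h2 : ‖∑ i ∈ Finset.range J, E (i+1) * (c (i+1) - c (i+2))‖ ≤ C := by
      refine le_trans (norm_sum_le _ _) ?_
      have hterm : ∀ i ∈ Finset.range J,
          ‖E (i+1) * (c (i+1) - c (i+2))‖
            ≤ C * (1/((i:ℝ)+1) - 1/((i:ℝ)+2)) := by
        intro i _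
        rw [norm_mul]
        have hd : (0:ℝ) ≤ 1/((i:ℝ)+1) - 1/((i:ℝ)+2) := by
          have h1 : (0:ℝ) < (i:ℝ)+1 := by positivity
          have h2 : (0:ℝ) < (i:ℝ)+2 := by positivity
          rw [sub_nonneg, div_le_div_iff₀ h2 h1]
          linarith
        have hcdiff : ‖c (i+1) - c (i+2)‖ = 1/((i:ℝ)+1) - 1/((i:ℝ)+2) := by
          rw [hcdef]
          rw [show ((1 / ((i+1:ℕ):ℝ) : ℝ) : ℂ) - ((1 / ((i+2:ℕ):ℝ) : ℝ) : ℂ)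
            = ((1/((i:ℝ)+1) - 1/((i:ℝ)+2) : ℝ) : ℂ) by push_cast; ring]
          rw [Complex.norm_real, Real.norm_eq_abs, abs_of_nonneg hd]
        rw [hcdiff]
        exact mul_le_mul (hE _) le_rfl hd hC0
      refine le_trans (Finset.sum_le_sum hterm) ?_
      rw [← Finset.mul_sum]
      have htel : ∑ i ∈ Finset.range J, (1/((i:ℝ)+1) - 1/((i:ℝ)+2)) ≤ 1 := by
        have h := Finset.sum_range_sub' (fun i : ℕ => 1/((i:ℝ)+1)) J
        rw [show ∑ i ∈ Finset.range J, (1/((i:ℝ)+1) - 1/((i:ℝ)+2))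
          = ∑ i ∈ Finset.range J, ((fun i : ℕ => 1/((i:ℝ)+1)) i - (fun i : ℕ => 1/((i:ℝ)+1)) (i+1)) by
            apply Finset.sum_congr rfl; intro i _; push_cast; ring_nf, h]
        have h0 : (0:ℝ) ≤ 1/((J:ℝ)+1) := by positivity
        simp only [Nat.cast_zero]
        norm_num
        linarith
      calc C * ∑ i ∈ Finset.range J, (1/((i:ℝ)+1) - 1/((i:ℝ)+2)) ≤ C * 1 :=
            mul_le_mul_of_nonneg_left htel hC0
        _ = C := mul_one C
    linarith
  have hLHS : ‖κ‖ * H = ‖κ * (H:ℂ)‖ := by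
    rw [norm_mul, Complex.norm_real, Real.norm_eq_abs, abs_of_nonneg hHnn]
  have hsum : ‖∑ i ∈ Finset.range J, (aF g (i+1) - aF g i) * c (i+1)‖
      ≤ ∑ i ∈ Finset.range J, (SF g (i+1) - SF g i) := by
    refine le_trans (norm_sum_le _ _) (Finset.sum_le_sum ?_)
    intro i _
    have hcn : ‖c (i+1)‖ = 1/((i:ℝ)+1) := by
      rw [hcdef, Complex.norm_real, Real.norm_eq_abs, abs_of_nonneg (by positivity)]
      push_cast
      ring_nf
    rw [norm_mul, hcn]
    exact stepA g i
  have htel2 : ∑ i ∈ Finset.range J, (SF g (i+1) - SF g i) = SF g J := by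
    rw [Finset.sum_range_sub (SF g) J, SF_zero, sub_zero]
  rw [hLHS]
  calc ‖κ * (H:ℂ)‖
      = ‖(∑ i ∈ Finset.range J, (aF g (i+1) - aF g i) * c (i+1))
          - ∑ i ∈ Finset.range J, (E (i+1) - E i) * c (i+1)‖ := by
        rw [hsplit]; congr 1; ring
    _ ≤ ‖∑ i ∈ Finset.range J, (aF g (i+1) - aF g i) * c (i+1)‖
          + ‖∑ i ∈ Finset.range J, (E (i+1) - E i) * c (i+1)‖ := norm_sub_le _ _
    _ ≤ SF g J + 2*C := by
        rw [← htel2]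
        exact add_le_add hsum herr

lemma log_one_add_ge {u : ℝ} (hu : 0 ≤ u) : u - u ^ 2 ≤ Real.log (1 + u) := by
  have h1 : (0:ℝ) < 1 + u := by linarith
  have h2 : Real.log (1 + u)⁻¹ ≤ (1 + u)⁻¹ - 1 :=
    Real.log_le_sub_one_of_pos (by positivity)
  rw [Real.log_inv] at h2
  have h3 : 1 - (1 + u)⁻¹ ≤ Real.log (1 + u) := by linarith
  have h5 : 1/(1+u) ≤ 1 - u + u^2 := by
    rw [div_le_iff₀ h1]; nlinarith
  rw [inv_eq_one_div] at h3
  linarith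

lemma harmonic_ge_log (J : ℕ) :
    Real.log (J + 1) ≤ ∑ i ∈ Finset.range J, (1 : ℝ) / (i + 1) := by
  have key : ∀ i : ℕ, Real.log ((i:ℝ) + 2) - Real.log ((i:ℝ) + 1) ≤ 1 / ((i:ℝ) + 1) := by
    intro i
    have h1 : (0:ℝ) < (i:ℝ) + 1 := by positivity
    rw [← Real.log_div (by positivity) (by positivity)]
    have := Real.log_le_sub_one_of_pos (show (0:ℝ) < ((i:ℝ)+2)/((i:ℝ)+1) by positivity)
    have heq : ((i:ℝ)+2)/((i:ℝ)+1) - 1 = 1/((i:ℝ)+1) := by field_simp; ring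
    linarith [heq ▸ this]
  calc Real.log (J + 1)
      = ∑ i ∈ Finset.range J, (Real.log ((i:ℝ) + 2) - Real.log ((i:ℝ) + 1)) := by
        have h := Finset.sum_range_sub (fun i => Real.log ((i:ℝ) + 1)) J
        simp only [Nat.cast_add, Nat.cast_one] at h
        rw [show ∑ i ∈ Finset.range J, (Real.log ((i:ℝ) + 2) - Real.log ((i:ℝ) + 1)) = ∑ i ∈ Finset.range J, (Real.log (((i:ℝ) + 1) + 1) - Real.log ((i:ℝ) + 1)) by apply Finset.sum_congr rfl; intros; ring_nf, h]
        norm_num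
    _ ≤ _ := Finset.sum_le_sum fun i _ => key i

lemma hexp2 (j : ℕ) (hj : 1 ≤ j) : (2:ℝ) ≤ Real.exp j := by
  calc (2:ℝ) = 1 + 1 := by norm_num
    _ ≤ Real.exp 1 := Real.add_one_le_exp 1
    _ ≤ Real.exp j := Real.exp_le_exp.2 (by exact_mod_cast hj)

lemma stepC (g : ℕ → ℂ) (β C₂ Q : ℝ) (hC₂ : 0 < C₂)
    (hCC : ∀ x : ℝ, 2 ≤ x →
      ∏ p ∈ primesLE x, (1 + ‖g p‖ / (p : ℝ)) ≤ C₂ * Real.log x ^ β)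
    (hQ : ∀ s : Finset ℕ, (∀ p ∈ s, Nat.Prime p) → ∑ p ∈ s, (‖g p‖ / p) ^ 2 ≤ Q)
    (J : ℕ) (hJ : 1 ≤ J) :
    SF g J ≤ Real.log C₂ + β * Real.log J + Q := by
  have hprimes : ∀ p ∈ primesLE (Real.exp J), Nat.Prime p := fun p hp =>
    ((mem_primesLE (Real.exp_pos _).le).1 hp).1
  have htnn : ∀ p : ℕ, (0:ℝ) ≤ ‖g p‖ / p := fun p => by positivity
  have h1 : SF g J ≤ (∑ p ∈ primesLE (Real.exp J), Real.log (1 + ‖g p‖ / p)) + Q := by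
    rw [SF]
    have hstep : ∀ p ∈ primesLE (Real.exp J),
        ‖g p‖ / p ≤ Real.log (1 + ‖g p‖ / p) + (‖g p‖ / p) ^ 2 := by
      intro p _
      have := log_one_add_ge (htnn p)
      linarith
    calc ∑ p ∈ primesLE (Real.exp J), ‖g p‖ / p
        ≤ ∑ p ∈ primesLE (Real.exp J), (Real.log (1 + ‖g p‖ / p) + (‖g p‖ / p) ^ 2) :=
          Finset.sum_le_sum hstep
      _ = (∑ p ∈ primesLE (Real.exp J), Real.log (1 + ‖g p‖ / p))
            + ∑ p ∈ primesLE (Real.exp J), (‖g p‖ / p) ^ 2 := Finset.sum_add_distrib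
      _ ≤ _ := by
          have := hQ (primesLE (Real.exp J)) hprimes
          linarith
  have hfacpos : ∀ p ∈ primesLE (Real.exp J), (0:ℝ) < 1 + ‖g p‖ / p := fun p _ => by
    have := htnn p; linarith
  have h2 : (∑ p ∈ primesLE (Real.exp J), Real.log (1 + ‖g p‖ / p))
      = Real.log (∏ p ∈ primesLE (Real.exp J), (1 + ‖g p‖ / p)) :=
    (Real.log_prod fun p hp => (hfacpos p hp).ne').symm
  have hprodpos : (0:ℝ) < ∏ p ∈ primesLE (Real.exp J), (1 + ‖g p‖ / p) :=
    Finset.prod_pos hfacpos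
  have hCCJ := hCC (Real.exp J) (hexp2 J hJ)
  rw [Real.log_exp] at hCCJ
  have hJpos : (0:ℝ) < J := by exact_mod_cast hJ
  have h3 : Real.log (∏ p ∈ primesLE (Real.exp J), (1 + ‖g p‖ / p))
      ≤ Real.log C₂ + β * Real.log J := by
    calc Real.log (∏ p ∈ primesLE (Real.exp J), (1 + ‖g p‖ / p))
        ≤ Real.log (C₂ * (J:ℝ) ^ β) := Real.log_le_log hprodpos hCCJ
      _ = Real.log C₂ + β * Real.log J := by
          rw [Real.log_mul hC₂.ne' (Real.rpow_pos_of_pos hJpos β).ne',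
            Real.log_rpow hJpos]
  rw [h2] at h1
  linarith

lemma quad_bound (g : ℕ → ℂ) (hB : CondB g) :
    ∃ Q : ℝ, ∀ s : Finset ℕ, (∀ p ∈ s, Nat.Prime p) →
      ∑ p ∈ s, (‖g p‖ / p) ^ 2 ≤ Q := by
  set F : Nat.Primes → ℝ≥0∞ := fun p =>
    ((‖g (p : ℕ)‖₊ : ℝ≥0∞) * ENNReal.ofReal (Real.log (p : ℕ)) / ((p : ℕ) : ℝ≥0∞)) *
      ∑' r : ℕ, (‖g ((p : ℕ) ^ (r + 1))‖₊ : ℝ≥0∞) / (((p : ℕ) ^ (r + 1) : ℕ) : ℝ≥0∞) with hF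
  have hT : ∑' p : Nat.Primes, F p ≠ ⊤ :=
    (lt_of_le_of_lt (le_add_of_nonneg_right zero_le) hB).ne
  refine ⟨(∑' p : Nat.Primes, F p).toReal / Real.log 2, ?_⟩
  intro s hs
  rw [div_eq_inv_mul, ← one_mul (∑ p ∈ s, (‖g p‖ / p) ^ 2)]
  have hlog2 : (0:ℝ) < Real.log 2 := Real.log_pos (by norm_num)
  rw [← inv_mul_cancel₀ hlog2.ne', mul_assoc, mul_le_mul_iff_right₀ (by positivity)]
  -- goal : Real.log 2 * ∑ ... ≤ toReal T
  rw [Finset.mul_sum]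
  rw [← ENNReal.ofReal_le_iff_le_toReal hT]
  have hnn : ∀ p ∈ s, 0 ≤ Real.log 2 * (‖g p‖ / p) ^ 2 := fun p _ => by positivity
  rw [ENNReal.ofReal_sum_of_nonneg hnn]
  -- convert to subtype sum
  have hsub : ∑ p ∈ s, ENNReal.ofReal (Real.log 2 * (‖g p‖ / p) ^ 2)
      = ∑ q ∈ s.subtype Nat.Prime,
          ENNReal.ofReal (Real.log 2 * (‖g (q : ℕ)‖ / (q : ℕ)) ^ 2) := by
    exact (Finset.sum_subtype_of_mem _ hs).symm
  rw [hsub]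
  refine le_trans (Finset.sum_le_sum ?_) (ENNReal.sum_le_tsum _)
  rintro ⟨q, hq⟩ _
  -- termwise bound
  have hq2 : (2 : ℕ) ≤ q := hq.two_le
  have hqpos : (0:ℝ) < q := by exact_mod_cast hq.pos
  have hterm : (ENNReal.ofReal (Real.log 2) * ((‖g q‖₊ : ℝ≥0∞) / (q:ℝ≥0∞)) * ((‖g q‖₊ : ℝ≥0∞) / (q:ℝ≥0∞))) ≤ F ⟨q, hq⟩ := by
    rw [hF]
    have hinner : ((‖g (q ^ 1)‖₊ : ℝ≥0∞) / ((q ^ 1 : ℕ) : ℝ≥0∞)) ≤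
        ∑' r : ℕ, (‖g (q ^ (r + 1))‖₊ : ℝ≥0∞) / (((q ^ (r + 1) : ℕ)) : ℝ≥0∞) :=
      ENNReal.le_tsum 0
    rw [pow_one] at hinner
    have hlogle : ENNReal.ofReal (Real.log 2) ≤ ENNReal.ofReal (Real.log q) :=
      ENNReal.ofReal_le_ofReal (Real.log_le_log (by norm_num) (by exact_mod_cast hq2))
    calc ENNReal.ofReal (Real.log 2) * ((‖g q‖₊ : ℝ≥0∞) / (q:ℝ≥0∞)) * ((‖g q‖₊ : ℝ≥0∞) / (q:ℝ≥0∞))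
        ≤ ENNReal.ofReal (Real.log q) * ((‖g q‖₊ : ℝ≥0∞) / (q:ℝ≥0∞)) * ((‖g q‖₊ : ℝ≥0∞) / (q:ℝ≥0∞)) := by
          gcongr
      _ = ((‖g q‖₊ : ℝ≥0∞) * ENNReal.ofReal (Real.log q) / (q:ℝ≥0∞)) * ((‖g q‖₊ : ℝ≥0∞) / (q:ℝ≥0∞)) := by
          simp only [div_eq_mul_inv]; ring
      _ ≤ _ := mul_le_mul_right hinner _
  refine le_trans (le_of_eq ?_) hterm
  have hd : ENNReal.ofReal (‖g q‖ / q) = (‖g q‖₊ : ℝ≥0∞) / (q:ℝ≥0∞) := by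
    rw [ENNReal.ofReal_div_of_pos hqpos, ENNReal.ofReal_natCast, ofReal_norm, enorm_eq_nnnorm]
  rw [sq, ← mul_assoc, ENNReal.ofReal_mul (by positivity), ENNReal.ofReal_mul hlog2.le, hd]

theorem stmt4 (g : ℕ → ℂ) (κ : ℂ) (β : ℝ) (hg : IsMult g)
    (hA : CondA g κ) (hB : CondB g)
    (hβ0 : 0 ≤ β) (hC : CondC g β) :
    ‖κ‖ ≤ β := by
  by_contra hcon
  push_neg at hcon
  obtain ⟨C, hAC⟩ := hA
  obtain ⟨C₂, hCC⟩ := hC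
  obtain ⟨Q, hQ⟩ := quad_bound g hB
  have hC0 : 0 ≤ C := le_trans (norm_nonneg _) (hAC 2 le_rfl)
  have hQ0 : 0 ≤ Q := by simpa using hQ ∅ (by simp)
  have hC₂ : 0 < C₂ := by
    have h1 : (1:ℝ) ≤ ∏ p ∈ primesLE 2, (1 + ‖g p‖ / (p:ℝ)) := by
      have h0 := Finset.prod_le_prod (s := primesLE 2) (f := fun _ : ℕ => (1:ℝ))
        (g := fun p : ℕ => 1 + ‖g p‖/p) (fun p _ => by norm_num)
        (fun p _ => by
          have : (0:ℝ) ≤ ‖g p‖/p := by positivity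
          linarith)
      simpa using h0
    have h2 := h1.trans (hCC 2 le_rfl)
    have h3 : (0:ℝ) < Real.log 2 ^ β := Real.rpow_pos_of_pos (Real.log_pos (by norm_num)) β
    nlinarith
  have hE : ∀ j : ℕ, ‖aF g j - κ * j‖ ≤ C := by
    intro j
    rcases Nat.eq_zero_or_pos j with h | h
    · rw [h, aF_zero]; simpa using hC0
    · have h2 := hAC (Real.exp j) (hexp2 j h)
      rw [Real.log_exp] at h2
      rw [aF, show ((j:ℕ):ℂ) = (((j:ℕ):ℝ):ℂ) by push_cast; ring]
      exact h2
  set K : ℝ := Real.log C₂ + Q + 2*C with hK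
  have hδ : 0 < ‖κ‖ - β := by linarith
  have hfinal : ∀ J : ℕ, 1 ≤ J → (‖κ‖ - β) * Real.log ((J:ℝ)+1) ≤ K := by
    intro J hJ
    have hH := harmonic_ge_log J
    have hB' := stepB g κ C hC0 hE J
    have hC' := stepC g β C₂ Q hC₂ hCC hQ J hJ
    have hJpos : (0:ℝ) < J := by exact_mod_cast hJ
    have hlog1 : Real.log (J:ℝ) ≤ Real.log ((J:ℝ)+1) := Real.log_le_log hJpos (by linarith)
    have hκnn : 0 ≤ ‖κ‖ := norm_nonneg κ
    have h1 : ‖κ‖ * Real.log ((J:ℝ)+1)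
        ≤ ‖κ‖ * (∑ i ∈ Finset.range J, (1:ℝ)/((i:ℝ)+1)) :=
      mul_le_mul_of_nonneg_left hH hκnn
    have h2 : β * Real.log (J:ℝ) ≤ β * Real.log ((J:ℝ)+1) :=
      mul_le_mul_of_nonneg_left hlog1 hβ0
    rw [hK]
    nlinarith
  set J : ℕ := ⌈Real.exp (K/(‖κ‖ - β))⌉₊ + 1 with hJdef
  have hJ1 : 1 ≤ J := Nat.le_add_left 1 _
  have h1 : Real.exp (K/(‖κ‖ - β)) < (J:ℝ) + 1 := by
    have h2 := Nat.le_ceil (Real.exp (K/(‖κ‖ - β)))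
    rw [hJdef]
    push_cast
    linarith
  have hlt : K/(‖κ‖ - β) < Real.log ((J:ℝ)+1) := by
    rwa [← Real.lt_log_iff_exp_lt (by positivity)] at h1
  have h3 := hfinal J hJ1
  rw [div_lt_iff₀ hδ] at hlt
  nlinarith
end

section
/- Suppose g : ℕ → ℝ is a nonnegative multiplicative function and there is a real number κ ≥ 0 such that ∑_{p ≤ x} g(p) log p / p = κ log x + O(1) for all x ≥ 2. Then ∏_{p ≤ x} (1 + g(p)/p) ≪ (log x)^κ for all x ≥ 2; that is, Condition (C) holds with β = κ. -/
open Filter Finset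

private lemma log_ratio_aux5 {a b : ℝ} (ha : 0 < a) (hab : a ≤ b) :
    1 - a / b ≤ Real.log b - Real.log a := by
  have hb : 0 < b := lt_of_lt_of_le ha hab
  have h := Real.log_le_sub_one_of_pos (div_pos ha hb)
  rw [Real.log_div (ne_of_gt ha) (ne_of_gt hb)] at h
  have : 0 < a / b := div_pos ha hb
  linarith

theorem stmt5 (g : ℕ → ℝ) (κ : ℝ)
    (hg : g 1 = 1 ∧ ∀ m n : ℕ, Nat.Coprime m n → g (m * n) = g m * g n)
    (hnonneg : ∀ n : ℕ, 0 ≤ g n) (hκ : 0 ≤ κ)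
    (hA : ∃ C : ℝ, ∀ x : ℝ, 2 ≤ x →
      |(∑ p ∈ primesLE x, g p * Real.log p / (p : ℝ)) - κ * Real.log x| ≤ C) :
    ∃ C : ℝ, ∀ x : ℝ, 2 ≤ x →
      ∏ p ∈ primesLE x, (1 + g p / (p : ℝ)) ≤ C * Real.log x ^ κ := by
  obtain ⟨C, hC⟩ := hA
  have hC0 : 0 ≤ C := le_trans (abs_nonneg _) (hC 2 le_rfl)
  set P : ℕ → Finset ℕ := fun n => (Finset.range (n + 1)).filter Nat.Prime with hPdef
  have hlog2 : 0 < Real.log 2 := Real.log_pos one_lt_two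
  have hAle : ∀ n : ℕ, 2 ≤ n →
      (∑ p ∈ P n, g p * Real.log p / (p : ℝ)) ≤ κ * Real.log n + C := by
    intro n hn
    have h2 : (2 : ℝ) ≤ (n : ℝ) := by exact_mod_cast hn
    have h := hC (n : ℝ) h2
    have hPeq : primesLE (n : ℝ) = P n := by
      simp [primesLE, hPdef, Nat.floor_natCast]
    rw [hPeq] at h
    have := (abs_le.mp h).2
    linarith
  -- the Abel-summation invariant
  have inv : ∀ n : ℕ, 2 ≤ n →
      (∑ p ∈ P n, g p / (p : ℝ)) ≤ (∑ p ∈ P n, g p * Real.log p / (p : ℝ)) / Real.log n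
        + κ * (Real.log (Real.log n) - Real.log (Real.log 2))
        + C * (1 / Real.log 2 - 1 / Real.log n) := by
    intro n hn
    induction n, hn using Nat.le_induction with
    | base =>
        have hP2 : P 2 = {2} := by decide
        rw [hP2]
        simp only [Finset.sum_singleton]
        have h2 : ((2 : ℕ) : ℝ) = (2 : ℝ) := by norm_num
        rw [h2]
        have : g 2 * Real.log 2 / 2 / Real.log 2 = g 2 / 2 := by
          field_simp
        rw [this]
        simp
    | succ n hn ih =>
        have hn2 : (2 : ℝ) ≤ (n : ℝ) := by exact_mod_cast hn
        have hnpos : (0 : ℝ) < (n : ℝ) := by linarith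
        set L : ℝ := Real.log n with hL
        set L' : ℝ := Real.log ((n : ℝ) + 1) with hL'
        have hL2 : Real.log 2 ≤ L := Real.log_le_log (by norm_num) hn2
        have hLpos : 0 < L := lt_of_lt_of_le hlog2 hL2
        have hLL' : L ≤ L' := Real.log_le_log hnpos (by linarith)
        have hL'pos : 0 < L' := lt_of_lt_of_le hLpos hLL'
        have hfrac : 0 ≤ 1 / L - 1 / L' := by
          have := one_div_le_one_div_of_le hLpos hLL'
          linarith
        set A : ℝ := ∑ p ∈ P n, g p * Real.log p / (p : ℝ) with hAdef
        have key : A * (1 / L - 1 / L')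
            ≤ κ * (Real.log L' - Real.log L) + C * (1 / L - 1 / L') := by
          have h1 : A * (1 / L - 1 / L') ≤ (κ * L + C) * (1 / L - 1 / L') :=
            mul_le_mul_of_nonneg_right (hAle n hn) hfrac
          have h2 : (κ * L + C) * (1 / L - 1 / L')
              = κ * (1 - L / L') + C * (1 / L - 1 / L') := by
            field_simp
          have h3 : 1 - L / L' ≤ Real.log L' - Real.log L := log_ratio_aux5 hLpos hLL'
          have h4 : κ * (1 - L / L') ≤ κ * (Real.log L' - Real.log L) :=
            mul_le_mul_of_nonneg_left h3 hκ
          linarith [h1, h2.le, h2.ge]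
        have hmain : (∑ p ∈ P n, g p / (p : ℝ)) ≤ A / L'
            + κ * (Real.log L' - Real.log (Real.log 2))
            + C * (1 / Real.log 2 - 1 / L') := by
          have hsplitA : A / L = A / L' + A * (1 / L - 1 / L') := by
            field_simp
            ring
          have hmono : κ * (Real.log L - Real.log (Real.log 2))
              + (κ * (Real.log L' - Real.log L)) = κ * (Real.log L' - Real.log (Real.log 2)) := by
            ring
          linarith [ih, key]
        have hcastlog : Real.log ((n + 1 : ℕ) : ℝ) = L' := by push_cast; rfl
        have hsplit : P (n + 1) = if Nat.Prime (n + 1) then insert (n + 1) (P n) else P n := by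
          simp [hPdef, Finset.range_add_one, Finset.filter_insert]
        by_cases hp : Nat.Prime (n + 1)
        · have hnotmem : (n + 1) ∉ P n := by simp [hPdef]
          rw [hsplit, if_pos hp, Finset.sum_insert hnotmem, Finset.sum_insert hnotmem,
            hcastlog]
          have hnp1 : (0 : ℝ) < ((n + 1 : ℕ) : ℝ) := by positivity
          have hterm : g (n + 1) * L' / ((n + 1 : ℕ) : ℝ) / L'
              = g (n + 1) / ((n + 1 : ℕ) : ℝ) := by
            rw [div_div, mul_comm ((n + 1 : ℕ) : ℝ) L', ← div_div,
              mul_div_assoc, div_self (ne_of_gt hL'pos), mul_one]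
          rw [add_div]
          linarith [hmain, hterm.le, hterm.ge]
        · rw [hsplit, if_neg hp, hcastlog]
          exact hmain
  -- conclude
  refine ⟨Real.exp (κ - κ * Real.log (Real.log 2) + C / Real.log 2), fun x hx => ?_⟩
  have hx1 : (1 : ℝ) < x := lt_of_lt_of_le one_lt_two hx
  have hlx : 0 < Real.log x := Real.log_pos hx1
  have hfl : 2 ≤ ⌊x⌋₊ := Nat.le_floor (by exact_mod_cast hx)
  set n := ⌊x⌋₊ with hndef
  have hPx : primesLE x = P n := rfl
  have h2n : (2 : ℝ) ≤ (n : ℝ) := by exact_mod_cast hfl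
  have hfle : (n : ℝ) ≤ x := Nat.floor_le (by linarith)
  have hlnpos : 0 < Real.log n := Real.log_pos (by linarith)
  have hln_le : Real.log n ≤ Real.log x := Real.log_le_log (by linarith) hfle
  have hlln : Real.log (Real.log n) ≤ Real.log (Real.log x) := Real.log_le_log hlnpos hln_le
  have hinv := inv n hfl
  have hAn := hAle n hfl
  have hAdiv : (∑ p ∈ P n, g p * Real.log p / (p : ℝ)) / Real.log n ≤ κ + C / Real.log n := by
    rw [div_le_iff₀ hlnpos]
    have : (κ + C / Real.log n) * Real.log n = κ * Real.log n + C := by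
      field_simp
    rw [this]
    exact hAn
  have hkmul : κ * Real.log (Real.log n) ≤ κ * Real.log (Real.log x) :=
    mul_le_mul_of_nonneg_left hlln hκ
  have hS : (∑ p ∈ P n, g p / (p : ℝ))
      ≤ κ * Real.log (Real.log x) + (κ - κ * Real.log (Real.log 2) + C / Real.log 2) := by
    have hexp1 : κ * (Real.log (Real.log n) - Real.log (Real.log 2))
        = κ * Real.log (Real.log n) - κ * Real.log (Real.log 2) := by ring
    have hexp2 : C * (1 / Real.log 2 - 1 / Real.log n)
        = C / Real.log 2 - C / Real.log n := by ring
    have hCn : 0 ≤ C / Real.log n := div_nonneg hC0 hlnpos.le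
    linarith
  have hprod : ∏ p ∈ P n, (1 + g p / (p : ℝ)) ≤ Real.exp (∑ p ∈ P n, g p / (p : ℝ)) := by
    rw [Real.exp_sum]
    refine Finset.prod_le_prod (fun p _ => ?_) (fun p _ => ?_)
    · have h1 : 0 ≤ g p / (p : ℝ) := div_nonneg (hnonneg p) (Nat.cast_nonneg p)
      linarith
    · linarith [Real.add_one_le_exp (g p / (p : ℝ))]
  rw [hPx]
  calc ∏ p ∈ P n, (1 + g p / (p : ℝ))
      ≤ Real.exp (∑ p ∈ P n, g p / (p : ℝ)) := hprod
    _ ≤ Real.exp (κ * Real.log (Real.log x)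
          + (κ - κ * Real.log (Real.log 2) + C / Real.log 2)) := by
        rw [Real.exp_le_exp]; linarith
    _ = Real.exp (κ - κ * Real.log (Real.log 2) + C / Real.log 2) * Real.log x ^ κ := by
        rw [Real.rpow_def_of_pos hlx, Real.exp_add]
        ring_nf
end

section
/- Let g : ℕ → ℂ be multiplicative. Then for every real x ≥ 1, ∑_{n ≤ x} g(n) log n / n = ∑_{r ≥ 1} ∑_{p ≤ x^{1/r}} (g(p^r) log(p^r) / p^r) · ∑_{m ≤ x/p^r, p ∤ m} g(m)/m, where the inner sums run over primes p with p^r ≤ x and over positive integers m ≤ x/p^r not divisible by p. -/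
open Filter Finset
open scoped ENNReal NNReal

lemma log_eq_sum_pairs (N n : ℕ) (hn : n ∈ Finset.Icc 1 N) :
    (Real.log n : ℝ) = ∑ pr ∈ ((Finset.Icc 1 N) ×ˢ (Finset.Icc 1 N)).filter
        (fun pr : ℕ × ℕ => pr.1.Prime ∧ pr.1 ^ pr.2 ∣ n ∧ ¬ pr.1 ^ (pr.2 + 1) ∣ n),
      Real.log ((pr.1 : ℝ) ^ pr.2) := by
  simp only [Finset.mem_Icc] at hn
  have hn0 : n ≠ 0 := by omega
  have key : Real.log n = ∑ p ∈ n.primeFactors, Real.log ((p:ℝ) ^ n.factorization p) := by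
    conv_lhs => rw [← Nat.factorization_prod_pow_eq_self hn0]
    rw [Finsupp.prod, Nat.support_factorization]
    push_cast
    rw [Real.log_prod]
    intro p hp
    have hp1 := (Nat.prime_of_mem_primeFactors hp).pos
    have : (0:ℝ) < p := by exact_mod_cast hp1
    positivity
  rw [key]
  refine Finset.sum_nbij' (fun p => (p, n.factorization p)) (fun pr => pr.1) ?_ ?_ ?_ ?_ ?_
  · intro p hp
    have hprime := Nat.prime_of_mem_primeFactors hp
    have hdvd : p ∣ n := Nat.dvd_of_mem_primeFactors hp
    have hf1 : 1 ≤ n.factorization p := (Nat.Prime.factorization_pos_of_dvd hprime hn0 hdvd)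
    have hpd : p ^ n.factorization p ∣ n := Nat.ordProj_dvd n p
    have hple : p ^ n.factorization p ≤ N := le_trans (Nat.le_of_dvd (by omega) hpd) hn.2
    have hfr : n.factorization p ≤ N := by
      calc n.factorization p ≤ p ^ n.factorization p := Nat.le_of_lt (Nat.lt_pow_self hprime.one_lt)
      _ ≤ N := hple
    simp only [Finset.mem_filter, Finset.mem_product, Finset.mem_Icc]
    exact ⟨⟨⟨hprime.pos, le_trans (Nat.le_of_dvd (by omega) hdvd) hn.2⟩, ⟨hf1, hfr⟩⟩, hprime, hpd, Nat.pow_succ_factorization_not_dvd hn0 hprime⟩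
  · intro pr hpr
    simp only [Finset.mem_filter, Finset.mem_product, Finset.mem_Icc] at hpr
    obtain ⟨⟨_, hr⟩, hprime, hdvd, hndvd⟩ := hpr
    refine Nat.mem_primeFactors.mpr ⟨hprime, dvd_trans (dvd_pow_self _ (by omega)) hdvd, hn0⟩
  · intro p hp
    rfl
  · intro pr hpr
    simp only [Finset.mem_filter, Finset.mem_product, Finset.mem_Icc] at hpr
    obtain ⟨⟨_, ⟨hr1, _⟩⟩, hprime, hdvd, hndvd⟩ := hpr
    have h1 : pr.2 ≤ n.factorization pr.1 := (Nat.Prime.pow_dvd_iff_le_factorization hprime hn0).mp hdvd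
    have h2 : ¬ (pr.2 + 1 ≤ n.factorization pr.1) := fun h => hndvd ((Nat.Prime.pow_dvd_iff_le_factorization hprime hn0).mpr h)
    have : n.factorization pr.1 = pr.2 := by omega
    ext <;> simp [this]
  · intro p hp
    rfl

/-- The identity `∑_{n ≤ x} g(n) log n / n
= ∑_{r ≥ 1} ∑_{p ≤ x^{1/r}} (g(p^r) log p^r / p^r) ∑_{m ≤ x/p^r, p ∤ m} g(m)/m`,
where the condition `p ≤ x^{1/r}` is expressed as `p^r ≤ ⌊x⌋₊` and pairs `(p, r)` range
over the (sufficiently large) finite set `Icc 1 ⌊x⌋₊ ×ˢ Icc 1 ⌊x⌋₊`. -/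
theorem stmt7 (g : ℕ → ℂ) (hg : IsMult g) (x : ℝ) (hx : 1 ≤ x) :
    ∑ n ∈ Finset.Icc 1 ⌊x⌋₊, g n * (Real.log n : ℂ) / (n : ℂ) =
      ∑ pr ∈ ((Finset.Icc 1 ⌊x⌋₊) ×ˢ (Finset.Icc 1 ⌊x⌋₊)).filter
          (fun pr => pr.1.Prime ∧ pr.1 ^ pr.2 ≤ ⌊x⌋₊),
        g (pr.1 ^ pr.2) * (Real.log ((pr.1 : ℝ) ^ pr.2) : ℂ) / ((pr.1 : ℂ) ^ pr.2) *
          ∑ m ∈ (Finset.Icc 1 ⌊x / (pr.1 : ℝ) ^ pr.2⌋₊).filter (fun m => ¬ pr.1 ∣ m),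
            g m / (m : ℂ) := by
  classical
  set N := ⌊x⌋₊ with hNdef
  have hx0 : (0:ℝ) ≤ x := by linarith
  have hNx : (N : ℝ) ≤ x := Nat.floor_le hx0
  -- Step 1: rewrite LHS using log decomposition
  have step1 : ∑ n ∈ Finset.Icc 1 N, g n * (Real.log n : ℂ) / (n : ℂ)
      = ∑ n ∈ Finset.Icc 1 N, ∑ pr ∈ ((Finset.Icc 1 N) ×ˢ (Finset.Icc 1 N)).filter
          (fun pr : ℕ × ℕ => pr.1.Prime ∧ pr.1 ^ pr.2 ∣ n ∧ ¬ pr.1 ^ (pr.2 + 1) ∣ n),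
          g n * (Real.log ((pr.1 : ℝ) ^ pr.2) : ℂ) / (n : ℂ) := by
    refine Finset.sum_congr rfl fun n hn => ?_
    rw [log_eq_sum_pairs N n hn]
    push_cast
    rw [Finset.mul_sum, Finset.sum_div]
  rw [step1]
  -- Step 2: rewrite RHS terms using mul_sum
  have step2 : ∀ pr : ℕ × ℕ,
      g (pr.1 ^ pr.2) * (Real.log ((pr.1 : ℝ) ^ pr.2) : ℂ) / ((pr.1 : ℂ) ^ pr.2) *
          ∑ m ∈ (Finset.Icc 1 ⌊x / (pr.1 : ℝ) ^ pr.2⌋₊).filter (fun m => ¬ pr.1 ∣ m),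
            g m / (m : ℂ)
      = ∑ m ∈ (Finset.Icc 1 ⌊x / (pr.1 : ℝ) ^ pr.2⌋₊).filter (fun m => ¬ pr.1 ∣ m),
          g (pr.1 ^ pr.2) * (Real.log ((pr.1 : ℝ) ^ pr.2) : ℂ) / ((pr.1 : ℂ) ^ pr.2) *
            (g m / (m : ℂ)) := fun pr => Finset.mul_sum _ _ _
  simp_rw [step2]
  rw [Finset.sum_sigma', Finset.sum_sigma']
  refine Finset.sum_nbij' (fun s => ⟨(s.2.1, s.2.2), s.1 / s.2.1 ^ s.2.2⟩)
    (fun s => ⟨s.1.1 ^ s.1.2 * s.2, (s.1.1, s.1.2)⟩) ?_ ?_ ?_ ?_ ?_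
  · -- forward membership
    rintro ⟨n, p, r⟩ hs
    simp only [Finset.mem_sigma, Finset.mem_filter, Finset.mem_product, Finset.mem_Icc] at hs ⊢
    obtain ⟨hn, ⟨⟨hp, hr⟩, hprime, hdvd, hndvd⟩⟩ := hs
    have hn0 : n ≠ 0 := by omega
    have hppos : 0 < p ^ r := pow_pos hprime.pos r
    have hprN : p ^ r ≤ N := le_trans (Nat.le_of_dvd (by omega) hdvd) hn.2
    obtain ⟨m, hm⟩ := hdvd
    have hmval : n / p ^ r = m := by rw [hm]; exact Nat.mul_div_cancel_left m hppos
    have hm0 : m ≠ 0 := by rintro rfl; simp at hm; omega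
    have hpm : ¬ p ∣ m := by
      intro hpm'
      exact hndvd (by rw [hm, pow_succ]; exact mul_dvd_mul (dvd_refl _) hpm')
    have hpR : (0:ℝ) < (p:ℝ) := by exact_mod_cast hprime.pos
    have hprR : (0:ℝ) < (p:ℝ) ^ r := by positivity
    have hmle : m ≤ ⌊x / (p:ℝ) ^ r⌋₊ := by
      apply Nat.le_floor
      rw [le_div_iff₀ hprR]
      have : ((p ^ r * m : ℕ) : ℝ) ≤ x := by
        rw [← hm]; exact le_trans (by exact_mod_cast hn.2) hNx
      push_cast at this ⊢
      linarith [this]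
    refine ⟨⟨⟨hp, hr⟩, hprime, hprN⟩, ⟨?_, ?_⟩, ?_⟩
    · rw [hmval]; omega
    · rw [hmval]; exact hmle
    · rw [hmval]; exact hpm
  · -- backward membership
    rintro ⟨⟨p, r⟩, m⟩ hs
    simp only [Finset.mem_sigma, Finset.mem_filter, Finset.mem_product, Finset.mem_Icc] at hs ⊢
    obtain ⟨⟨⟨hp, hr⟩, hprime, hprN⟩, ⟨hm1, hm2⟩, hpm⟩ := hs
    have hppos : 0 < p ^ r := pow_pos hprime.pos r
    have hpR : (0:ℝ) < (p:ℝ) := by exact_mod_cast hprime.pos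
    have hprR : (0:ℝ) < (p:ℝ) ^ r := by positivity
    have hxr0 : (0:ℝ) ≤ x / (p:ℝ) ^ r := by positivity
    have hmx : (m : ℝ) ≤ x / (p:ℝ) ^ r := le_trans (Nat.cast_le.mpr hm2) (Nat.floor_le hxr0)
    have hnle : p ^ r * m ≤ N := by
      apply Nat.le_floor
      push_cast
      rw [le_div_iff₀ hprR] at hmx
      linarith [hmx]
    refine ⟨⟨?_, hnle⟩, ⟨hp, hr⟩, hprime, dvd_mul_right _ _, ?_⟩
    · exact Nat.one_le_iff_ne_zero.mpr (Nat.mul_ne_zero hppos.ne' (by omega))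
    · intro hdvd
      rw [pow_succ] at hdvd
      exact hpm ((mul_dvd_mul_iff_left (a := p ^ r) hppos.ne').mp hdvd)
  · -- left inverse
    rintro ⟨n, p, r⟩ hs
    simp only [Finset.mem_sigma, Finset.mem_filter, Finset.mem_product, Finset.mem_Icc] at hs
    obtain ⟨hn, ⟨_, hprime, hdvd, _⟩⟩ := hs
    simp only
    congr 1
    exact Nat.mul_div_cancel' hdvd
  · -- right inverse
    rintro ⟨⟨p, r⟩, m⟩ hs
    simp only [Finset.mem_sigma, Finset.mem_filter, Finset.mem_product, Finset.mem_Icc] at hs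
    obtain ⟨⟨_, hprime, _⟩, _⟩ := hs
    have hppos : 0 < p ^ r := pow_pos hprime.pos r
    simp only
    congr 1
    exact Nat.mul_div_cancel_left m hppos
  · -- values agree
    rintro ⟨n, p, r⟩ hs
    simp only [Finset.mem_sigma, Finset.mem_filter, Finset.mem_product, Finset.mem_Icc] at hs
    obtain ⟨hn, ⟨_, hprime, hdvd, hndvd⟩⟩ := hs
    have hppos : 0 < p ^ r := pow_pos hprime.pos r
    obtain ⟨m, hm⟩ := hdvd
    have hmval : n / p ^ r = m := by rw [hm]; exact Nat.mul_div_cancel_left m hppos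
    have hpm : ¬ p ∣ m := by
      intro hpm'
      exact hndvd (by rw [hm, pow_succ]; exact mul_dvd_mul (dvd_refl _) hpm')
    have hcop : Nat.Coprime (p ^ r) m := (Nat.Prime.coprime_iff_not_dvd hprime |>.mpr hpm).pow_left _
    simp only [hmval]
    rw [hm, hg.2 _ _ hcop]
    push_cast
    ring
end

section
/- Suppose g : ℕ → ℂ is multiplicative, that ∑_p ∑_{r=2}^∞ |g(p^r)|/p^r < ∞, and that Condition (C) holds with some β ≥ 0. Then ∑_{m ≤ x} |g(m)|/m ≪_g (log x)^β for all x ≥ 2. -/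
open Filter Finset
open scoped ENNReal NNReal

noncomputable def innerE (g : ℕ → ℂ) (q : ℕ) : ℝ≥0∞ :=
  ∑' r : ℕ, (‖g (q ^ (r + 2))‖₊ : ℝ≥0∞) / ((q ^ (r + 2) : ℕ) : ℝ≥0∞)

theorem stmt11 (g : ℕ → ℂ) (β : ℝ) (hg : IsMult g)
    (hhigher : (∑' p : Nat.Primes, ∑' r : ℕ,
        (‖g ((p : ℕ) ^ (r + 2))‖₊ : ℝ≥0∞) / (((p : ℕ) ^ (r + 2) : ℕ) : ℝ≥0∞)) < ⊤)
    (hβ0 : 0 ≤ β) (hC : CondC g β) :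
    ∃ C : ℝ, ∀ x : ℝ, 2 ≤ x →
      (∑ m ∈ Finset.Icc 1 ⌊x⌋₊, ‖g m‖ / (m : ℝ)) ≤ C * Real.log x ^ β := by
  classical
  obtain ⟨C, hc⟩ := hC
  set F : ℕ → ℝ := fun m => ‖g m‖ / m with hFdef
  have hF0 : ∀ m, 0 ≤ F m := fun m => div_nonneg (norm_nonneg _) (Nat.cast_nonneg _)
  have hF1 : F 1 = 1 := by simp [hFdef, hg.1]
  have hFmul : ∀ {m n : ℕ}, Nat.Coprime m n → F (m * n) = F m * F n := by
    intro m n h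
    simp only [hFdef, hg.2 m n h, norm_mul, Nat.cast_mul]
    rw [div_mul_div_comm]
  have htot : (∑' p : Nat.Primes, innerE g (p : ℕ)) < ⊤ := by
    simpa [innerE] using hhigher
  have hinner_lt : ∀ p : Nat.Primes, innerE g (p : ℕ) < ⊤ := fun p =>
    lt_of_le_of_lt (ENNReal.le_tsum p) htot
  have hterm_ne : ∀ q : ℕ, q ≠ 0 → ∀ r : ℕ,
      ((‖g (q ^ (r + 2))‖₊ : ℝ≥0∞) / ((q ^ (r + 2) : ℕ) : ℝ≥0∞)) ≠ ⊤ := by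
    intro q hq r
    refine (ENNReal.div_lt_top ENNReal.coe_ne_top ?_).ne
    exact_mod_cast pow_ne_zero _ hq
  have htoReal : ∀ q : ℕ, q ≠ 0 → (innerE g q).toReal = ∑' r : ℕ, F (q ^ (r + 2)) := by
    intro q hq
    rw [innerE, ENNReal.tsum_toReal_eq (hterm_ne q hq)]
    refine tsum_congr fun r => ?_
    rw [ENNReal.toReal_div]
    simp [hFdef]
  have hsummable_tail : ∀ p : ℕ, p.Prime → Summable (fun r : ℕ => F (p ^ (r + 2))) := by
    intro p hp
    have h := ENNReal.summable_toReal (f := fun r : ℕ =>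
      (‖g (p ^ (r + 2))‖₊ : ℝ≥0∞) / ((p ^ (r + 2) : ℕ) : ℝ≥0∞)) (hinner_lt ⟨p, hp⟩).ne
    refine h.congr fun r => ?_
    rw [ENNReal.toReal_div]
    simp [hFdef]
  have hsummable_pow : ∀ p : ℕ, p.Prime → Summable (fun n : ℕ => F (p ^ n)) := by
    intro p hp
    exact (summable_nat_add_iff 2).mp (hsummable_tail p hp)
  have hsummable_norm : ∀ {p : ℕ}, p.Prime → Summable (fun n : ℕ => ‖F (p ^ n)‖) := by
    intro p hp
    exact (hsummable_pow p hp).congr fun n => (Real.norm_of_nonneg (hF0 _)).symm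
  set S : ℝ := (∑' p : Nat.Primes, innerE g (p : ℕ)).toReal with hSdef
  refine ⟨C * Real.exp S, fun x hx => ?_⟩
  set N : ℕ := ⌊x⌋₊ + 1 with hNdef
  obtain ⟨hsum_sm, hprod⟩ :=
    EulerProduct.summable_and_hasSum_smoothNumbers_prod_primesBelow_tsum hF1 hFmul
      hsummable_norm N
  -- the finite sum is at most the tsum over smooth numbers
  have hsub : ∀ m ∈ Finset.Icc 1 ⌊x⌋₊, m ∈ N.smoothNumbers := by
    intro m hm
    rw [Finset.mem_Icc] at hm
    refine Nat.mem_smoothNumbers.mpr ⟨by omega, fun p hp => ?_⟩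
    have h1 : p ≤ m := Nat.le_of_mem_primeFactorsList hp
    omega
  have hsumF : Summable (fun m : N.smoothNumbers => F m) := hsum_sm.of_norm
  have hind : Summable ((N.smoothNumbers : Set ℕ).indicator F) :=
    summable_subtype_iff_indicator.mp hsumF
  have hle1 : ∑ m ∈ Finset.Icc 1 ⌊x⌋₊, F m ≤ ∑' m : N.smoothNumbers, F m := by
    rw [_root_.tsum_subtype]
    refine le_trans (le_of_eq (Finset.sum_congr rfl fun m hm =>
      (Set.indicator_of_mem (hsub m hm) F).symm)) ?_
    exact Summable.sum_le_tsum _ (fun m _ => Set.indicator_nonneg (fun a _ => hF0 a) m) hind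
  have hP : ∑' m : N.smoothNumbers, F m = ∏ p ∈ N.primesBelow, ∑' n : ℕ, F (p ^ n) :=
    hprod.tsum_eq
  -- bound each Euler factor
  have hfac : ∀ p ∈ N.primesBelow, (∑' n : ℕ, F (p ^ n)) ≤
      (1 + ‖g p‖ / p) * Real.exp ((innerE g p).toReal) := by
    intro p hpmem
    have hp := Nat.prime_of_mem_primesBelow hpmem
    have hs0 := hsummable_pow p hp
    have hs1 : Summable (fun n : ℕ => F (p ^ (n + 1))) := (summable_nat_add_iff 1).mpr hs0
    have e1 : ∑' n : ℕ, F (p ^ n)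
        = F (p ^ 0) + (F (p ^ (0 + 1)) + ∑' r : ℕ, F (p ^ (r + 1 + 1))) := by
      rw [Summable.tsum_eq_zero_add hs0, Summable.tsum_eq_zero_add hs1]
    have e2 : (∑' r : ℕ, F (p ^ (r + 1 + 1))) = ∑' r : ℕ, F (p ^ (r + 2)) :=
      tsum_congr fun r => rfl
    rw [e1, e2, pow_zero, zero_add, pow_one, hF1]
    have hT0 : 0 ≤ ∑' r : ℕ, F (p ^ (r + 2)) := tsum_nonneg fun r => hF0 _
    have hTeq : (innerE g p).toReal = ∑' r : ℕ, F (p ^ (r + 2)) := htoReal p hp.pos.ne'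
    rw [hTeq]
    set T : ℝ := ∑' r : ℕ, F (p ^ (r + 2))
    have ha : 0 ≤ ‖g p‖ / (p : ℝ) := hF0 p
    have hE := Real.add_one_le_exp T
    have hFp : F p = ‖g p‖ / (p : ℝ) := rfl
    rw [hFp]
    nlinarith [mul_nonneg ha (by linarith : (0:ℝ) ≤ Real.exp T - (1 + T)), ha, hT0,
      mul_nonneg ha hT0]
  have htsum0 : ∀ p ∈ N.primesBelow, 0 ≤ ∑' n : ℕ, F (p ^ n) :=
    fun p _ => tsum_nonneg fun n => hF0 _
  -- sum of the toReal tails is at most S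
  have hne : ∀ p ∈ N.primesBelow, innerE g p ≠ ⊤ := fun p hp =>
    (hinner_lt ⟨p, Nat.prime_of_mem_primesBelow hp⟩).ne
  have hSsum : ∑ p ∈ N.primesBelow, (innerE g p).toReal ≤ S := by
    rw [← ENNReal.toReal_sum hne]
    refine ENNReal.toReal_mono htot.ne ?_
    let emb : {x // x ∈ N.primesBelow} ↪ Nat.Primes :=
      ⟨fun q => ⟨q.1, Nat.prime_of_mem_primesBelow q.2⟩,
       fun a b h => Subtype.ext (show a.1 = b.1 from
         congrArg (fun q : Nat.Primes => (q : ℕ)) h)⟩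
    have hmap : ∑ p ∈ N.primesBelow, innerE g p
        = ∑ q ∈ (N.primesBelow.attach).map emb, innerE g (q : ℕ) := by
      rw [Finset.sum_map (N.primesBelow.attach) emb (fun q : Nat.Primes => innerE g (q : ℕ))]
      exact (Finset.sum_attach N.primesBelow (fun p : ℕ => innerE g p)).symm
    rw [hmap]
    exact ENNReal.sum_le_tsum _
  have hprodC : ∏ p ∈ N.primesBelow, (1 + ‖g p‖ / p) ≤ C * Real.log x ^ β := by
    have h := hc x hx
    have : primesLE x = N.primesBelow := rfl
    rwa [this] at h
  have hprod1 : (1:ℝ) ≤ ∏ p ∈ N.primesBelow, (1 + ‖g p‖ / p) := by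
    have h := Finset.prod_le_prod (s := N.primesBelow) (f := fun _ : ℕ => (1:ℝ))
      (g := fun p : ℕ => 1 + ‖g p‖ / (p : ℝ)) (fun _ _ => zero_le_one)
      (fun p _ => by
        have := hF0 p
        simp only [hFdef] at this
        linarith)
    simpa using h
  calc ∑ m ∈ Finset.Icc 1 ⌊x⌋₊, F m
      ≤ ∏ p ∈ N.primesBelow, ∑' n : ℕ, F (p ^ n) := hle1.trans (le_of_eq hP)
    _ ≤ ∏ p ∈ N.primesBelow, ((1 + ‖g p‖ / p) * Real.exp ((innerE g p).toReal)) :=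
        Finset.prod_le_prod htsum0 hfac
    _ = (∏ p ∈ N.primesBelow, (1 + ‖g p‖ / p)) *
          ∏ p ∈ N.primesBelow, Real.exp ((innerE g p).toReal) := Finset.prod_mul_distrib
    _ = (∏ p ∈ N.primesBelow, (1 + ‖g p‖ / p)) *
          Real.exp (∑ p ∈ N.primesBelow, (innerE g p).toReal) := by rw [Real.exp_sum]
    _ ≤ (C * Real.log x ^ β) * Real.exp S := by
        refine mul_le_mul hprodC (Real.exp_le_exp.mpr hSsum) (Real.exp_pos _).le ?_
        exact le_trans zero_le_one (hprod1.trans hprodC)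
    _ = (C * Real.exp S) * Real.log x ^ β := by ring
end

section
/- Suppose g : ℕ → ℂ satisfies Condition (A) for some complex number κ. Then the tail sum ∑_{p > x} (g(p) − κ)/p^{s+1} converges for every real s ≥ 0 and satisfies ∑_{p > x} (g(p) − κ)/p^{s+1} ≪_g 1/(x^s log x) uniformly for all s ≥ 0 and all x ≥ 2. -/
open Filter Finset

open Nat in
private def PP (n : ℕ) : Finset ℕ := (Finset.range (n+1)).filter Nat.Prime

open Nat

lemma my_abel_identity (c : ℕ → ℂ) (w : ℕ → ℝ) (m : ℕ) :
    ∀ N, m < N →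
    ∑ n ∈ Finset.Ioc m N, c n * (w n : ℂ)
      = (∑ k ∈ Finset.range (N+1), c k) * (w N : ℂ)
        - (∑ k ∈ Finset.range (m+1), c k) * (w (m+1) : ℂ)
        + ∑ n ∈ Finset.Ico (m+1) N, (∑ k ∈ Finset.range (n+1), c k) * ((w n - w (n+1) : ℝ) : ℂ) := by
  intro N
  induction N with
  | zero => intro h; exact absurd h (Nat.not_lt_zero m)
  | succ N ih =>
    intro h
    rcases Nat.lt_or_ge m N with hmN | hmN
    · rw [Finset.sum_Ioc_succ_top (le_of_lt hmN), ih hmN,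
        Finset.sum_Ico_succ_top (by omega : m + 1 ≤ N),
        Finset.sum_range_succ c (N+1)]
      push_cast
      ring
    · have hm : N = m := le_antisymm hmN (Nat.lt_succ_iff.mp h)
      subst hm
      rw [show Finset.Ioc N (N+1) = {N+1} by rw [Nat.Ioc_succ_singleton],
        Finset.sum_singleton, Finset.Ico_self, Finset.sum_empty,
        Finset.sum_range_succ c (N+1)]
      push_cast
      ring

lemma my_abel_bound (c : ℕ → ℂ) (w : ℕ → ℝ) (m : ℕ) (K : ℝ)
    (hS : ∀ n, ‖∑ k ∈ Finset.range (n+1), c k‖ ≤ K)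
    (hw0 : ∀ n, m < n → 0 ≤ w n)
    (hwa : ∀ n, m < n → w (n+1) ≤ w n) (N : ℕ) :
    ‖∑ n ∈ Finset.Ioc m N, c n * (w n : ℂ)‖ ≤ 2 * K * w (m+1) := by
  have hK : 0 ≤ K := le_trans (norm_nonneg _) (hS 0)
  have hw1 : 0 ≤ w (m+1) := hw0 _ (Nat.lt_succ_self m)
  rcases le_or_gt N m with hNm | hmN
  · rw [Finset.Ioc_eq_empty (by omega), Finset.sum_empty, norm_zero]
    positivity
  · rw [my_abel_identity c w m N hmN]
    have tele : ∑ n ∈ Finset.Ico (m+1) N, (w n - w (n+1)) = w (m+1) - w N := by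
      rw [Finset.sum_Ico_eq_sum_range]
      have h2 := Finset.sum_range_sub' (fun i => w (m+1+i)) (N - (m+1))
      calc ∑ i ∈ Finset.range (N - (m+1)), (w (m+1+i) - w (m+1+i+1))
          = ∑ i ∈ Finset.range (N - (m+1)), (w (m+1+i) - w (m+1+(i+1))) := by
            apply Finset.sum_congr rfl; intro i _; norm_num [Nat.add_assoc]
        _ = w (m+1+0) - w (m+1+(N-(m+1))) := h2
        _ = w (m+1) - w N := by rw [Nat.add_zero, Nat.add_sub_cancel' (by omega : m+1 ≤ N)]
    have hbnd : ∀ n ∈ Finset.Ico (m+1) N,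
        ‖(∑ k ∈ Finset.range (n+1), c k) * ((w n - w (n+1) : ℝ) : ℂ)‖ ≤ K * (w n - w (n+1)) := by
      intro n hn
      rw [norm_mul, Complex.norm_real, Real.norm_eq_abs,
        abs_of_nonneg (sub_nonneg.mpr (hwa n (by simp at hn; omega)))]
      exact mul_le_mul_of_nonneg_right (hS n)
        (sub_nonneg.mpr (hwa n (by simp at hn; omega)))
    calc ‖_ - _ + _‖
        ≤ ‖(∑ k ∈ Finset.range (N+1), c k) * (w N : ℂ)‖
          + ‖(∑ k ∈ Finset.range (m+1), c k) * (w (m+1) : ℂ)‖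
          + ‖∑ n ∈ Finset.Ico (m+1) N, (∑ k ∈ Finset.range (n+1), c k) * ((w n - w (n+1) : ℝ) : ℂ)‖ := by
          refine le_trans (norm_add_le _ _) ?_
          gcongr
          exact norm_sub_le _ _
      _ ≤ K * w N + K * w (m+1) + (K * (w (m+1)) - K * w N) := by
          gcongr ?_ + ?_ + ?_
          · rw [norm_mul, Complex.norm_real, Real.norm_eq_abs,
              abs_of_nonneg (hw0 N hmN)]
            exact mul_le_mul_of_nonneg_right (hS N) (hw0 N hmN)
          · rw [norm_mul, Complex.norm_real, Real.norm_eq_abs, abs_of_nonneg hw1]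
            exact mul_le_mul_of_nonneg_right (hS m) hw1
          · refine le_trans (norm_sum_le _ _) ?_
            refine le_trans (Finset.sum_le_sum hbnd) ?_
            rw [← Finset.mul_sum, tele]
            ring_nf
            exact le_refl _
      _ = 2 * K * w (m+1) := by ring

private lemma log_factorial_eq (n : ℕ) :
    Real.log (n ! : ℕ) = ∑ p ∈ PP n, ((n !).factorization p : ℝ) * Real.log p := by
  rw [Real.log_nat_eq_sum_factorization, Finsupp.sum]
  apply Finset.sum_subset
  · intro p hp
    rw [Nat.support_factorization] at hp
    have hp' := Nat.prime_of_mem_primeFactors hp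
    have hd := (Nat.Prime.dvd_factorial hp').mp (Nat.dvd_of_mem_primeFactors hp)
    simp only [PP, Finset.mem_filter, Finset.mem_range]
    exact ⟨by omega, hp'⟩
  · intro p _ hp
    rw [Finsupp.notMem_support_iff.mp hp]
    simp

private lemma nu_eq {p : ℕ} (hp : p.Prime) (n : ℕ) (hn : n ≠ 0) :
    (n !).factorization p = ∑ i ∈ Finset.Ico 1 (n+1), n / p ^ i := by
  haveI := Fact.mk hp
  rw [Nat.factorization_def _ hp]
  exact padicValNat_factorial (by have := Nat.log_lt_self p hn; omega)

private lemma nu_lower {p n : ℕ} (hp : p.Prime) (hpn : p ≤ n) :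
    (n:ℝ)/p - 1 ≤ ((n !).factorization p : ℝ) := by
  have hn : n ≠ 0 := by have := hp.two_le; omega
  have hp0 : 0 < p := hp.pos
  rw [nu_eq hp n hn]
  have h1 : n / p ≤ ∑ i ∈ Finset.Ico 1 (n+1), n / p ^ i := by
    have h : n / p = n / p ^ 1 := by rw [pow_one]
    rw [h]
    exact Finset.single_le_sum (f := fun i => n / p ^ i) (fun i _ => Nat.zero_le _)
      (by simp only [Finset.mem_Ico]; omega)
  have h2 : (n:ℝ)/p - 1 ≤ ((n / p : ℕ) : ℝ) := by
    have hmod : n < p * (n / p) + p := by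
      have := Nat.div_add_mod n p
      have := Nat.mod_lt n hp0
      omega
    have hcast : (n:ℝ) < p * ((n / p : ℕ):ℝ) + p := by exact_mod_cast hmod
    have hp0' : (0:ℝ) < p := by exact_mod_cast hp0
    rw [div_sub_one hp0'.ne', div_le_iff₀ hp0']
    nlinarith
  calc (n:ℝ)/p - 1 ≤ ((n / p : ℕ) : ℝ) := h2
    _ ≤ _ := by exact_mod_cast h1

private lemma nu_upper {p n : ℕ} (hp : p.Prime) (hn : n ≠ 0) :
    ((n !).factorization p : ℝ) ≤ n / ((p:ℝ) - 1) := by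
  have hp2 : (2:ℝ) ≤ p := by exact_mod_cast hp.two_le
  have hp0 : (0:ℝ) < p := by linarith
  rw [nu_eq hp n hn]
  push_cast
  have step1 : ∑ i ∈ Finset.Ico 1 (n+1), ((n / p ^ i : ℕ):ℝ)
      ≤ ∑ i ∈ Finset.Ico 1 (n+1), (n:ℝ) * ((p:ℝ)⁻¹)^i := by
    apply Finset.sum_le_sum
    intro i _
    calc ((n / p ^ i : ℕ):ℝ) ≤ (n:ℝ) / ((p^i : ℕ):ℝ) := Nat.cast_div_le
      _ = (n:ℝ) * ((p:ℝ)⁻¹)^i := by push_cast; rw [inv_pow]; ring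
  have geo : ∑ i ∈ Finset.Ico 1 (n+1), ((p:ℝ)⁻¹)^i ≤ 1 / ((p:ℝ) - 1) := by
    have hr0 : (0:ℝ) < (p:ℝ)⁻¹ := by positivity
    have hr1 : (p:ℝ)⁻¹ < 1 := by rw [inv_lt_one_iff₀]; right; linarith
    rw [Finset.sum_Ico_eq_sum_range]
    simp only [Nat.add_sub_cancel]
    have : ∑ i ∈ Finset.range n, ((p:ℝ)⁻¹)^(1+i)
        = (p:ℝ)⁻¹ * ∑ i ∈ Finset.range n, ((p:ℝ)⁻¹)^i := by
      rw [Finset.mul_sum]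
      exact Finset.sum_congr rfl fun i _ => by rw [pow_add, pow_one]
    rw [this, geom_sum_eq hr1.ne]
    have hkey : (((p:ℝ)⁻¹) ^ n - 1) / ((p:ℝ)⁻¹ - 1) = (1 - ((p:ℝ)⁻¹) ^ n)/(1 - (p:ℝ)⁻¹) := by
      rw [← neg_div_neg_eq]; ring_nf
    rw [hkey]
    have h1r : (0:ℝ) < 1 - (p:ℝ)⁻¹ := by linarith
    have hpn : (0:ℝ) ≤ ((p:ℝ)⁻¹)^n := by positivity
    calc (p:ℝ)⁻¹ * ((1 - ((p:ℝ)⁻¹) ^ n)/(1 - (p:ℝ)⁻¹))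
        ≤ (p:ℝ)⁻¹ * (1/(1 - (p:ℝ)⁻¹)) := by gcongr; linarith
      _ = 1 / ((p:ℝ) - 1) := by
          field_simp
  calc ∑ i ∈ Finset.Ico 1 (n+1), ((n / p ^ i : ℕ):ℝ)
      ≤ ∑ i ∈ Finset.Ico 1 (n+1), (n:ℝ) * ((p:ℝ)⁻¹)^i := step1
    _ = (n:ℝ) * ∑ i ∈ Finset.Ico 1 (n+1), ((p:ℝ)⁻¹)^i := by rw [Finset.mul_sum]
    _ ≤ (n:ℝ) * (1 / ((p:ℝ) - 1)) := by
        apply mul_le_mul_of_nonneg_left geo (by positivity)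
    _ = n / ((p:ℝ) - 1) := by ring

private lemma theta_le (n : ℕ) : ∑ p ∈ PP n, Real.log p ≤ n * Real.log 4 := by
  have h1 : ∑ p ∈ PP n, Real.log p = Real.log ((primorial n : ℕ) : ℝ) := by
    rw [primorial]
    rw [Nat.cast_prod, Real.log_prod]
    · rfl
    · intro p hp
      have := (Finset.mem_filter.mp hp).2.pos
      positivity
  rw [h1]
  calc Real.log ((primorial n : ℕ) : ℝ) ≤ Real.log (((4:ℕ)^n : ℕ) : ℝ) := by
        apply Real.log_le_log (by exact_mod_cast primorial_pos n)
        exact_mod_cast primorial_le_4_pow n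
    _ = n * Real.log 4 := by push_cast; rw [Real.log_pow]

-- term bound for ∑ log p / (p(p-1))
private lemma logp_term_le {p : ℕ} (hp : p.Prime) :
    Real.log p / (p * ((p:ℝ) - 1)) ≤ 4 / (p:ℝ) ^ (3/2 : ℝ) := by
  have hp2 : (2:ℝ) ≤ p := by exact_mod_cast hp.two_le
  have hp0 : (0:ℝ) < p := by linarith
  have hlog : Real.log p ≤ 2 * (p:ℝ) ^ (1/2 : ℝ) := by
    have := Real.log_le_rpow_div (le_of_lt hp0) (by norm_num : (0:ℝ) < 1/2)
    calc Real.log p ≤ (p:ℝ) ^ (1/2:ℝ) / (1/2) := this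
      _ = 2 * (p:ℝ) ^ (1/2 : ℝ) := by ring
  have hden : (p:ℝ)^2 / 2 ≤ p * ((p:ℝ) - 1) := by nlinarith
  calc Real.log p / (p * ((p:ℝ) - 1))
      ≤ (2 * (p:ℝ) ^ (1/2:ℝ)) / ((p:ℝ)^2 / 2) := by
        apply div_le_div₀ (by positivity) hlog (by positivity) hden
    _ = 4 / (p:ℝ) ^ (3/2 : ℝ) := by
        have hps : (p:ℝ)^(2:ℕ) = (p:ℝ) ^ (1/2:ℝ) * (p:ℝ) ^ (3/2:ℝ) := by
          rw [← Real.rpow_natCast _ 2, ← Real.rpow_add hp0]; norm_num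
        rw [hps]
        have h1 : (0:ℝ) < (p:ℝ) ^ (1/2:ℝ) := by positivity
        have h2 : (0:ℝ) < (p:ℝ) ^ (3/2:ℝ) := by positivity
        field_simp
        ring

private lemma summable_dom : Summable (fun m : ℕ => 4 / (m:ℝ) ^ (3/2 : ℝ)) := by
  have := (Real.summable_one_div_nat_rpow (p := 3/2)).mpr (by norm_num)
  simpa [div_eq_mul_inv] using this.mul_left 4

-- pow_le_exp_mul_factorial
private lemma pow_le_exp_mul_factorial : ∀ n : ℕ, (n:ℝ)^n ≤ Real.exp n * n ! := by
  intro n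
  induction n with
  | zero => simp
  | succ n ih =>
    rcases Nat.eq_zero_or_pos n with rfl | hn
    · norm_num
    · have hn0 : (0:ℝ) < n := by exact_mod_cast hn
      have key : ((n:ℝ)+1)^n ≤ Real.exp 1 * (n:ℝ)^n := by
        have h1 : (n:ℝ)+1 ≤ n * Real.exp (1/n) := by
          have := Real.add_one_le_exp (1/(n:ℝ))
          calc (n:ℝ)+1 = n * (1/n + 1) := by field_simp; ring
            _ ≤ n * Real.exp (1/n) := by
                apply mul_le_mul_of_nonneg_left this (le_of_lt hn0)
        calc ((n:ℝ)+1)^n ≤ ((n:ℝ) * Real.exp (1/n))^n := by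
              apply pow_le_pow_left₀ (by positivity) h1
          _ = (n:ℝ)^n * Real.exp (1/n) ^ n := by rw [mul_pow]
          _ = Real.exp 1 * (n:ℝ)^n := by
              rw [← Real.exp_nat_mul]
              have : (n:ℝ) * (1/n) = 1 := by field_simp
              rw [this]; ring
      have hfac : (0:ℝ) < (n ! : ℕ) := by exact_mod_cast Nat.factorial_pos n
      calc ((n+1:ℕ):ℝ)^(n+1) = ((n:ℝ)+1)^n * ((n:ℝ)+1) := by push_cast; ring
        _ ≤ (Real.exp 1 * (n:ℝ)^n) * ((n:ℝ)+1) := by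
            apply mul_le_mul_of_nonneg_right key (by positivity)
        _ ≤ (Real.exp 1 * (Real.exp n * n !)) * ((n:ℝ)+1) := by
            apply mul_le_mul_of_nonneg_right
              (mul_le_mul_of_nonneg_left ih (le_of_lt (Real.exp_pos 1))) (by positivity)
        _ = Real.exp ((n:ℝ)+1) * (((n:ℝ)+1) * n !) := by
            rw [Real.exp_add]; ring
        _ = Real.exp ((n+1:ℕ):ℝ) * ((n+1)! : ℕ) := by
            push_cast [Nat.factorial_succ]; ring

private lemma logfac_up (n : ℕ) : Real.log (n ! : ℕ) ≤ n * Real.log n := by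
  calc Real.log (n ! : ℕ) ≤ Real.log ((n^n : ℕ) : ℝ) := by
        apply Real.log_le_log (by exact_mod_cast Nat.factorial_pos n)
        exact_mod_cast Nat.factorial_le_pow n
    _ = n * Real.log n := by push_cast; rw [Real.log_pow]

private lemma logfac_low (n : ℕ) (hn : 1 ≤ n) :
    (n:ℝ) * Real.log n - n ≤ Real.log (n ! : ℕ) := by
  have hn0 : (0:ℝ) < n := by exact_mod_cast hn
  have h := pow_le_exp_mul_factorial n
  have hfac : (0:ℝ) < (n ! : ℕ) := by exact_mod_cast Nat.factorial_pos n
  have hlog := Real.log_le_log (by positivity) h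
  rw [Real.log_pow, Real.log_mul (Real.exp_ne_zero _) hfac.ne', Real.log_exp] at hlog
  linarith

private lemma mertens_nat : ∃ C : ℝ, 0 ≤ C ∧ ∀ n : ℕ, 2 ≤ n →
    |(∑ p ∈ PP n, Real.log p / p) - Real.log n| ≤ C := by
  set B : ℝ := ∑' m : ℕ, 4 / (m:ℝ) ^ (3/2 : ℝ) with hBdef
  have hB0 : 0 ≤ B := tsum_nonneg fun m => by positivity
  have hlog4 : 0 ≤ Real.log 4 := Real.log_nonneg (by norm_num)
  refine ⟨1 + B + Real.log 4, by linarith, ?_⟩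
  intro n hn
  have hn0 : (0:ℝ) < n := by exact_mod_cast (by omega : 0 < n)
  have hmem : ∀ p ∈ PP n, p.Prime ∧ p ≤ n := by
    intro p hp
    have := Finset.mem_filter.mp hp
    exact ⟨this.2, by have := Finset.mem_range.mp this.1; omega⟩
  have hlogp : ∀ p ∈ PP n, 0 ≤ Real.log p := fun p hp =>
    Real.log_nonneg (by exact_mod_cast (hmem p hp).1.one_lt.le)
  set T : ℝ := ∑ p ∈ PP n, Real.log p / p with hT
  have hfac := log_factorial_eq n
  -- upper bound
  have hA : (n:ℝ) * T ≤ (n:ℝ) * Real.log n + n * Real.log 4 := by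
    have h1 : (n:ℝ) * T = ∑ p ∈ PP n, ((n:ℝ)/p) * Real.log p := by
      rw [hT, Finset.mul_sum]
      exact Finset.sum_congr rfl fun p _ => by ring
    rw [h1]
    calc ∑ p ∈ PP n, ((n:ℝ)/p) * Real.log p
        ≤ ∑ p ∈ PP n, (((n !).factorization p : ℝ) + 1) * Real.log p := by
          apply Finset.sum_le_sum
          intro p hp
          have h := nu_lower (hmem p hp).1 (hmem p hp).2
          exact mul_le_mul_of_nonneg_right (by linarith) (hlogp p hp)
      _ = (∑ p ∈ PP n, ((n !).factorization p : ℝ) * Real.log p)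
            + ∑ p ∈ PP n, Real.log p := by
          rw [← Finset.sum_add_distrib]
          exact Finset.sum_congr rfl fun p _ => by ring
      _ ≤ (n:ℝ) * Real.log n + n * Real.log 4 := by
          apply add_le_add _ (theta_le n)
          rw [← hfac]; exact logfac_up n
  -- lower bound
  have hBsum : ∑ p ∈ PP n, Real.log p / (p * ((p:ℝ) - 1)) ≤ B := by
    calc ∑ p ∈ PP n, Real.log p / (p * ((p:ℝ) - 1))
        ≤ ∑ p ∈ PP n, 4 / (p:ℝ) ^ (3/2 : ℝ) :=
          Finset.sum_le_sum fun p hp => logp_term_le (hmem p hp).1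
      _ ≤ B := Summable.sum_le_tsum (PP n) (fun m _ => by positivity) summable_dom
  have hB : (n:ℝ) * Real.log n - n ≤ (n:ℝ) * T + n * B := by
    have h2 : Real.log (n ! : ℕ)
        ≤ ∑ p ∈ PP n, (((n:ℝ)/p) + (n:ℝ)/(p * ((p:ℝ)-1))) * Real.log p := by
      rw [hfac]
      apply Finset.sum_le_sum
      intro p hp
      have hp2 : (2:ℝ) ≤ p := by exact_mod_cast (hmem p hp).1.two_le
      have hpne : (p:ℝ) ≠ 0 := by linarith
      have hp1ne : (p:ℝ) - 1 ≠ 0 := by linarith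
      have hsplit : (n:ℝ)/((p:ℝ)-1) = (n:ℝ)/p + (n:ℝ)/(p*((p:ℝ)-1)) := by
        field_simp
        ring
      have h := nu_upper (p := p) (n := n) (hmem p hp).1 (by omega)
      rw [hsplit] at h
      exact mul_le_mul_of_nonneg_right h (hlogp p hp)
    have h3 : ∑ p ∈ PP n, (((n:ℝ)/p) + (n:ℝ)/(p * ((p:ℝ)-1))) * Real.log p
        = (n:ℝ) * T + (n:ℝ) * ∑ p ∈ PP n, Real.log p / (p * ((p:ℝ) - 1)) := by
      rw [hT, Finset.mul_sum, Finset.mul_sum, ← Finset.sum_add_distrib]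
      exact Finset.sum_congr rfl fun p _ => by ring
    have h4 := logfac_low n (by omega)
    have h5 : (n:ℝ) * ∑ p ∈ PP n, Real.log p / (p * ((p:ℝ) - 1)) ≤ n * B :=
      mul_le_mul_of_nonneg_left hBsum (le_of_lt hn0)
    linarith
  have h6 : Real.log n - T ≤ 1 + B := by nlinarith [hB, hn0]
  have h7 : T - Real.log n ≤ Real.log 4 := by nlinarith [hA, hn0]
  rw [abs_le]
  constructor <;> [linarith; linarith]

private lemma PP_small : PP 0 = ∅ ∧ PP 1 = ∅ := by
  constructor <;> decide

private lemma Sg_bound (g : ℕ → ℂ) (κ : ℂ) (hA : CondA g κ) :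
    ∃ M : ℝ, 0 ≤ M ∧ ∀ n : ℕ,
      ‖∑ p ∈ PP n, (g p - κ) * (Real.log p : ℂ) / p‖ ≤ M := by
  obtain ⟨C₀, hC₀⟩ := hA
  obtain ⟨Cm, hCm0, hCm⟩ := mertens_nat
  have hC₀0 : 0 ≤ C₀ := le_trans (norm_nonneg _) (hC₀ 2 (le_refl 2))
  refine ⟨C₀ + ‖κ‖ * Cm, by positivity, ?_⟩
  intro n
  rcases Nat.lt_or_ge n 2 with hn | hn
  · interval_cases n
    · rw [PP_small.1, Finset.sum_empty, norm_zero]; positivity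
    · rw [PP_small.2, Finset.sum_empty, norm_zero]; positivity
  · have hPLE : primesLE (n:ℝ) = PP n := by
      rw [_root_.primesLE, Nat.floor_natCast]; rfl
    have h1 := hC₀ (n:ℝ) (by exact_mod_cast hn)
    rw [hPLE] at h1
    have h2 := hCm n hn
    have hsplit : ∑ p ∈ PP n, (g p - κ) * (Real.log p : ℂ) / p
        = ((∑ p ∈ PP n, g p * (Real.log p : ℂ) / p) - κ * (Real.log n : ℂ))
          - κ * (((∑ p ∈ PP n, Real.log p / p) - Real.log n : ℝ) : ℂ) := by
      have hc : (((∑ p ∈ PP n, Real.log p / p : ℝ)) : ℂ)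
          = ∑ p ∈ PP n, (Real.log p : ℂ) / (p : ℂ) := by
        push_cast
        rfl
      rw [Finset.sum_congr rfl (fun p _ => by
        ring : ∀ p ∈ PP n, (g p - κ) * (Real.log p : ℂ) / p
          = g p * (Real.log p : ℂ) / p - κ * ((Real.log p : ℂ) / p))]
      rw [Finset.sum_sub_distrib, ← Finset.mul_sum, ← hc]
      push_cast
      ring
    rw [hsplit]
    calc ‖_ - _‖ ≤ ‖(∑ p ∈ PP n, g p * (Real.log p : ℂ) / p) - κ * (Real.log n : ℂ)‖
          + ‖κ * (((∑ p ∈ PP n, Real.log p / p) - Real.log n : ℝ) : ℂ)‖ := norm_sub_le _ _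
      _ ≤ C₀ + ‖κ‖ * Cm := by
          apply add_le_add h1
          rw [norm_mul, Complex.norm_real, Real.norm_eq_abs]
          exact mul_le_mul_of_nonneg_left h2 (norm_nonneg κ)

private lemma wmono {s : ℝ} (hs : 0 ≤ s) {a b : ℝ} (ha : 2 ≤ a) (hab : a ≤ b) :
    1 / (b ^ s * Real.log b) ≤ 1 / (a ^ s * Real.log a) := by
  have ha0 : (0:ℝ) < a := by linarith
  have hla : 0 < Real.log a := Real.log_pos (by linarith)
  have hpa : 0 < a ^ s := Real.rpow_pos_of_pos ha0 s
  apply one_div_le_one_div_of_le (by positivity)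
  have h1 : a ^ s ≤ b ^ s := Real.rpow_le_rpow (le_of_lt ha0) hab hs
  have h2 : Real.log a ≤ Real.log b := Real.log_le_log ha0 hab
  nlinarith

private lemma term_eq {s : ℝ} (hs : 0 ≤ s) {n : ℕ} (hn : 2 ≤ n) (z : ℂ) :
    z / ((n:ℂ) ^ ((s:ℂ)+1))
      = (z * (Real.log n : ℂ) / n) * ((1 / ((n:ℝ) ^ s * Real.log n) : ℝ) : ℂ) := by
  have h2 : (2:ℝ) ≤ (n:ℝ) := by exact_mod_cast hn
  have hn0 : (0:ℝ) < n := by linarith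
  have hlog : 0 < Real.log n := Real.log_pos (by linarith)
  have hps : (0:ℝ) < (n:ℝ) ^ s := Real.rpow_pos_of_pos hn0 s
  have hcp : ((n:ℂ) ^ ((s:ℂ)+1)) = ((((n:ℝ) ^ (s+1) : ℝ)) : ℂ) := by
    rw [show ((n:ℕ):ℂ) = (((n:ℝ)):ℂ) by push_cast; rfl,
      show ((s:ℂ)+1) = ((s+1:ℝ):ℂ) by push_cast; ring,
      ← Complex.ofReal_cpow (le_of_lt hn0)]
  rw [hcp, Real.rpow_add_one hn0.ne' s]
  have hpsne : ((((n:ℝ) ^ s : ℝ)) : ℂ) ≠ 0 := by exact_mod_cast hps.ne'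
  have hlogne : (((Real.log n : ℝ)) : ℂ) ≠ 0 := by exact_mod_cast hlog.ne'
  have hnne : ((n:ℝ) : ℂ) ≠ 0 := by exact_mod_cast hn0.ne'
  rw [show ((n:ℕ):ℂ) = (((n:ℝ)):ℂ) by push_cast; rfl, Complex.ofReal_mul,
    Complex.ofReal_div, Complex.ofReal_one, Complex.ofReal_mul]
  have hclog : Complex.log ((n:ℕ):ℂ) ≠ 0 := by
    rw [show ((n:ℕ):ℂ) = (((n:ℝ)):ℂ) by push_cast; rfl, ← Complex.ofReal_log hn0.le]
    exact hlogne
  have hnne' : ((n:ℕ):ℂ) ≠ 0 := Nat.cast_ne_zero.mpr (by omega)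
  field_simp [hclog]

theorem stmt14 (g : ℕ → ℂ) (κ : ℂ) (hA : CondA g κ) :
    ∃ C : ℝ, ∀ s : ℝ, 0 ≤ s → ∀ x : ℝ, 2 ≤ x →
      ∃ L : ℂ,
        Tendsto
          (fun N : ℕ =>
            ∑ p ∈ (Finset.range N).filter (fun p => Nat.Prime p ∧ x < (p : ℝ)),
              (g p - κ) / ((p : ℂ) ^ ((s : ℂ) + 1)))
          atTop (nhds L) ∧
        ‖L‖ ≤ C / (x ^ s * Real.log x) := by
  obtain ⟨M, hM0, hM⟩ := Sg_bound g κ hA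
  refine ⟨4 * M, ?_⟩
  intro s hs x hx
  set m : ℕ := ⌊x⌋₊ with hm
  have hx0 : (0:ℝ) ≤ x := by linarith
  have hm2 : 2 ≤ m := Nat.le_floor (by exact_mod_cast hx)
  have hxm1 : x ≤ ((m+1 : ℕ) : ℝ) := by
    have := Nat.lt_floor_add_one x
    rw [hm]
    push_cast
    linarith
  -- the weight and coefficient sequences
  set w : ℕ → ℝ := fun n => 1 / ((n:ℝ) ^ s * Real.log n) with hw
  set c : ℕ → ℂ := fun n =>
    if m < n ∧ n.Prime then (g n - κ) * (Real.log n : ℂ) / n else 0 with hc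
  set d : ℕ → ℂ := fun n =>
    if n.Prime then (g n - κ) * (Real.log n : ℂ) / n else 0 with hd
  have hSgd : ∀ j : ℕ, ∑ k ∈ Finset.range (j+1), d k
      = ∑ p ∈ PP j, (g p - κ) * (Real.log p : ℂ) / p := by
    intro j
    rw [PP, Finset.sum_filter]
  have hS : ∀ n : ℕ, ‖∑ k ∈ Finset.range (n+1), c k‖ ≤ 2 * M := by
    intro n
    have hck : ∀ k, c k = if m < k then d k else 0 := by
      intro k
      simp only [hc, hd]
      by_cases h1 : m < k <;> by_cases h2 : k.Prime <;> simp [h1, h2]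
    have hstep : ∑ k ∈ Finset.range (n+1), c k = ∑ k ∈ Finset.Ico (m+1) (n+1), d k := by
      calc ∑ k ∈ Finset.range (n+1), c k
          = ∑ k ∈ (Finset.range (n+1)).filter (m < ·), d k := by
            rw [Finset.sum_filter]
            exact Finset.sum_congr rfl fun k _ => hck k
        _ = ∑ k ∈ Finset.Ico (m+1) (n+1), d k := by
            congr 1
            ext k
            simp only [Finset.mem_filter, Finset.mem_range, Finset.mem_Ico]
            omega
    rw [hstep]
    rcases Nat.lt_or_ge n (m+1) with h | h
    · rw [Finset.Ico_eq_empty (by omega), Finset.sum_empty, norm_zero]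
      positivity
    · rw [Finset.sum_Ico_eq_sub d (by omega : m + 1 ≤ n + 1)]
      calc ‖∑ k ∈ Finset.range (n+1), d k - ∑ k ∈ Finset.range (m+1), d k‖
          ≤ ‖∑ k ∈ Finset.range (n+1), d k‖ + ‖∑ k ∈ Finset.range (m+1), d k‖ :=
            norm_sub_le _ _
        _ ≤ 2 * M := by
            rw [hSgd n, hSgd m]
            have := hM n; have := hM m; linarith
  have hw0 : ∀ n : ℕ, m < n → 0 ≤ w n := by
    intro n hn
    have h2 : (2:ℝ) ≤ (n:ℝ) := by exact_mod_cast (by omega : 2 ≤ n)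
    have : 0 < Real.log n := Real.log_pos (by linarith)
    have : (0:ℝ) < (n:ℝ) ^ s := Real.rpow_pos_of_pos (by linarith) s
    positivity
  have hwa : ∀ n : ℕ, m < n → w (n+1) ≤ w n := by
    intro n hn
    have h2 : (2:ℝ) ≤ (n:ℝ) := by exact_mod_cast (by omega : 2 ≤ n)
    have := wmono hs h2 (by push_cast; linarith : (n:ℝ) ≤ ((n+1:ℕ):ℝ))
    simpa [hw] using this
  -- the partial-sum sequence over Ioc m ·
  set G : ℕ → ℂ := fun b => ∑ n ∈ Finset.Ioc m b, c n * (w n : ℂ) with hG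
  have hGbound : ∀ N, ‖G N‖ ≤ 2 * (2*M) * w (m+1) :=
    fun N => my_abel_bound c w m (2*M) hS hw0 hwa N
  have hwpos1 : 0 ≤ w (m+1) := hw0 (m+1) (Nat.lt_succ_self m)
  -- difference bound
  have hdiff : ∀ a b : ℕ, m ≤ a → a ≤ b → ‖G b - G a‖ ≤ 2 * (2*M) * w (a+1) := by
    intro a b ha hab
    have hsum := Finset.sum_Ioc_consecutive (fun n => c n * (w n : ℂ)) ha hab
    have : G b - G a = ∑ n ∈ Finset.Ioc a b, c n * (w n : ℂ) := by
      rw [hG]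
      simp only
      rw [← hsum]; ring
    rw [this]
    exact my_abel_bound c w a (2*M) hS
      (fun n hn => hw0 n (by omega)) (fun n hn => hwa n (by omega)) b
  -- Cauchy
  have hwmono_nat : ∀ a b : ℕ, m < a → a ≤ b → w b ≤ w a := by
    intro a b ha hab
    have h2 : (2:ℝ) ≤ (a:ℝ) := by exact_mod_cast (by omega : 2 ≤ a)
    exact wmono hs h2 (by exact_mod_cast hab)
  have hcauchy : CauchySeq G := by
    apply cauchySeq_of_le_tendsto_0 (fun N => 2 * (2*M) * w (max m N + 1))
    · intro p q N hp hq
      wlog hpq : p ≤ q generalizing p q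
      · rw [_root_.dist_comm]; exact this q p hq hp (by omega)
      have hGp : G p = G (max p m) := by
        rcases le_or_gt p m with h | h
        · have h1 : G p = 0 := by
            rw [hG]; simp only; rw [Finset.Ioc_eq_empty (by omega), Finset.sum_empty]
          have h2 : G (max p m) = 0 := by
            rw [hG]; simp only
            rw [Finset.Ioc_eq_empty (by omega : ¬ m < max p m), Finset.sum_empty]
          rw [h1, h2]
        · rw [Nat.max_eq_left (by omega)]
      have hGq : G q = G (max q m) := by
        rcases le_or_gt q m with h | h
        · have h1 : G q = 0 := by
            rw [hG]; simp only; rw [Finset.Ioc_eq_empty (by omega), Finset.sum_empty]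
          have h2 : G (max q m) = 0 := by
            rw [hG]; simp only
            rw [Finset.Ioc_eq_empty (by omega : ¬ m < max q m), Finset.sum_empty]
          rw [h1, h2]
        · rw [Nat.max_eq_left (by omega)]
      rw [dist_eq_norm, hGp, hGq, ← norm_neg, neg_sub]
      calc ‖G (max q m) - G (max p m)‖
          ≤ 2 * (2*M) * w (max p m + 1) :=
            hdiff (max p m) (max q m) (le_max_right _ _) (by omega)
        _ ≤ 2 * (2*M) * w (max m N + 1) := by
            apply mul_le_mul_of_nonneg_left _ (by positivity)
            exact hwmono_nat (max m N + 1) (max p m + 1) (by omega) (by omega)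
    · -- tendsto 0
      have hup : ∀ᶠ N in atTop, 2 * (2*M) * w (max m N + 1)
          ≤ 4 * M / Real.log ((N:ℝ) + 1) := by
        filter_upwards [eventually_ge_atTop 2] with N hN
        have h2 : (2:ℝ) ≤ ((max m N + 1 : ℕ):ℝ) := by
          have : 2 ≤ max m N + 1 := by omega
          exact_mod_cast this
        have hla : 0 < Real.log ((max m N + 1 : ℕ):ℝ) := Real.log_pos (by linarith)
        have hlb : 0 < Real.log ((N:ℝ) + 1) := Real.log_pos (by
          have : (2:ℝ) ≤ (N:ℝ) := by exact_mod_cast hN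
          linarith)
        have h1 : w (max m N + 1) ≤ 1 / Real.log ((max m N + 1 : ℕ):ℝ) := by
          rw [hw]
          simp only
          apply one_div_le_one_div_of_le hla
          have hone : 1 ≤ ((max m N + 1 : ℕ):ℝ) ^ s :=
            Real.one_le_rpow (by linarith) hs
          nlinarith
        have h2' : 1 / Real.log ((max m N + 1 : ℕ):ℝ) ≤ 1 / Real.log ((N:ℝ) + 1) := by
          apply one_div_le_one_div_of_le hlb
          apply Real.log_le_log (by
            have : (2:ℝ) ≤ (N:ℝ) := by exact_mod_cast hN
            linarith)
          exact_mod_cast (by omega : N + 1 ≤ max m N + 1)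
        calc 2 * (2*M) * w (max m N + 1) = 4 * M * w (max m N + 1) := by ring
          _ ≤ 4 * M * (1 / Real.log ((N:ℝ) + 1)) :=
              mul_le_mul_of_nonneg_left (le_trans h1 h2') (by positivity)
          _ = 4 * M / Real.log ((N:ℝ) + 1) := by ring
      have hlo : ∀ᶠ N in atTop, (0:ℝ) ≤ 2 * (2*M) * w (max m N + 1) := by
        filter_upwards with N
        have := hw0 (max m N + 1) (by omega)
        positivity
      have hto : Tendsto (fun N : ℕ => 4 * M / Real.log ((N:ℝ) + 1)) atTop (nhds 0) := by
        apply Tendsto.div_atTop tendsto_const_nhds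
        apply Real.tendsto_log_atTop.comp
        apply tendsto_atTop_add_const_right
        exact tendsto_natCast_atTop_atTop
      exact tendsto_of_tendsto_of_tendsto_of_le_of_le' tendsto_const_nhds hto hlo hup
  obtain ⟨L, hL⟩ := cauchySeq_tendsto_of_complete hcauchy
  refine ⟨L, ?_, ?_⟩
  · -- convergence of the stated partial sums
    have hFeq : ∀ N : ℕ,
        ∑ p ∈ (Finset.range N).filter (fun p => Nat.Prime p ∧ x < (p : ℝ)),
          (g p - κ) / ((p : ℂ) ^ ((s : ℂ) + 1)) = G (N - 1) := by
      intro N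
      have hsetseq : (Finset.range N).filter (fun p => Nat.Prime p ∧ x < (p : ℝ))
          = (Finset.Ioc m (N-1)).filter Nat.Prime := by
        ext p
        simp only [Finset.mem_filter, Finset.mem_range, Finset.mem_Ioc]
        constructor
        · rintro ⟨h1, h2, h3⟩
          have : m < p := (Nat.floor_lt hx0).mpr h3
          exact ⟨⟨this, by omega⟩, h2⟩
        · rintro ⟨⟨h1, h2⟩, h3⟩
          refine ⟨by omega, h3, ?_⟩
          calc x < ((m+1 : ℕ):ℝ) := by
                rw [hm]; push_cast; exact Nat.lt_floor_add_one x
            _ ≤ (p:ℝ) := by exact_mod_cast (by omega : m + 1 ≤ p)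
      rw [hsetseq, Finset.sum_filter, hG]
      simp only
      apply Finset.sum_congr rfl
      intro n hn
      have hn2 : 2 ≤ n := by
        have := (Finset.mem_Ioc.mp hn).1; omega
      by_cases hp : n.Prime
      · rw [if_pos hp]
        have hcn : c n = (g n - κ) * (Real.log n : ℂ) / n := by
          rw [hc]
          simp only
          rw [if_pos ⟨(Finset.mem_Ioc.mp hn).1, hp⟩]
        rw [hcn, ← term_eq hs hn2 (g n - κ)]
      · rw [if_neg hp]
        have hcn : c n = 0 := by
          rw [hc]; simp only
          rw [if_neg (by tauto)]
        rw [hcn, zero_mul]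
    have : Tendsto (fun N : ℕ => G (N - 1)) atTop (nhds L) :=
      hL.comp (tendsto_sub_atTop_nat 1)
    exact this.congr (fun N => (hFeq N).symm)
  · -- norm bound
    have hLnorm : ‖L‖ ≤ 2 * (2*M) * w (m+1) :=
      le_of_tendsto hL.norm (Eventually.of_forall hGbound)
    have hwle : w (m+1) ≤ 1 / (x ^ s * Real.log x) := by
      have := wmono hs hx hxm1
      simpa [hw] using this
    calc ‖L‖ ≤ 2 * (2*M) * w (m+1) := hLnorm
      _ ≤ 4 * M * (1 / (x ^ s * Real.log x)) := by
          have : 2 * (2*M) = 4 * M := by ring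
          rw [this]
          exact mul_le_mul_of_nonneg_left hwle (by positivity)
      _ = 4 * M / (x ^ s * Real.log x) := by ring
end
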